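/- arXiv:2007.11039 — 9 statements merged into one kernel-verified Lean document; each statement's English description precedes it below -/
import Mathlib

section
/- For every integer g ≥ 1, the continued fraction identity (4g+3)/(3g+2) = [2, 2, 3, 2, 2, ..., 2]^- holds, where there are g-1 twos following the 3. -/
/-- Negative continued fraction `[x_1, ..., x_n]^- = x_1 - 1/(x_2 - 1/(... - 1/x_n))`. -/
def ncf : List ℤ → ℚ
  | [] => 0
  | [x] => (x : ℚ)
  | x :: xs => (x : ℚ) - 1 / ncf xs

lemma ncf_cons (x y : ℤ) (ys : List ℤ) : ncf (x :: y :: ys) = (x : ℚ) - 1 / ncf (y :: ys) := rfl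

lemma ncf_rep (k : ℕ) : ncf (List.replicate (k+1) 2) = ((k:ℚ)+2)/((k:ℚ)+1) := by
  induction k with
  | zero => simp [ncf]
  | succ n ih =>
      have h : List.replicate (n+2) (2:ℤ) = 2 :: List.replicate (n+1) 2 := rfl
      have h2 : List.replicate (n+1) (2:ℤ) = 2 :: List.replicate n 2 := rfl
      rw [h, h2, ncf_cons, ← h2, ih]
      have hne : ((n:ℚ)+1) ≠ 0 := by positivity
      have hne2 : ((n:ℚ)+2) ≠ 0 := by positivity
      push_cast
      field_simp
      ring

lemma ncf_three (k : ℕ) : ncf (3 :: List.replicate k 2) = (2*(k:ℚ)+3)/((k:ℚ)+1) := by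
  cases k with
  | zero => simp [ncf]
  | succ n =>
      have h : List.replicate (n+1) (2:ℤ) = 2 :: List.replicate n 2 := rfl
      rw [h, ncf_cons, ← h, ncf_rep]
      have hne : ((n:ℚ)+1) ≠ 0 := by positivity
      have hne2 : ((n:ℚ)+2) ≠ 0 := by positivity
      push_cast
      field_simp
      ring

theorem stmt_2 (g : ℕ) (hg : 1 ≤ g) :
    ncf (2 :: 2 :: 3 :: List.replicate (g - 1) 2) = (4 * (g : ℚ) + 3) / (3 * (g : ℚ) + 2) := by
  obtain ⟨k, rfl⟩ : ∃ k, g = k + 1 := ⟨g - 1, (Nat.succ_pred_eq_of_pos hg).symm⟩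
  simp only [Nat.add_sub_cancel]
  rw [ncf_cons, ncf_cons, ncf_three]
  have h1 : ((k:ℚ)+1) ≠ 0 := by positivity
  have h2 : (2*(k:ℚ)+3) ≠ 0 := by positivity
  have h3 : (3*(k:ℚ)+5) ≠ 0 := by positivity
  push_cast
  have e1 : (2:ℚ) - 1 / ((2*(k:ℚ)+3)/((k:ℚ)+1)) = (3*(k:ℚ)+5)/(2*(k:ℚ)+3) := by
    field_simp; ring
  rw [e1]
  have e2 : (2:ℚ) - 1 / ((3*(k:ℚ)+5)/(2*(k:ℚ)+3)) = (4*(k:ℚ)+7)/(3*(k:ℚ)+5) := by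
    field_simp; ring
  rw [e2]
  have h4 : (3*(k:ℚ)+2+3) ≠ 0 := by positivity
  field_simp
  ring
end

section
/- Let σ ∈ ℤ^{n+1} be a vector of nonnegative integers with σ_0 ≤ σ_1 ≤ ... ≤ σ_n. Then σ is a changemaker if and only if for every integer j with |j| ≤ σ_0 + ... + σ_n and j ≡ σ_0 + ... + σ_n (mod 2), there exists a choice of signs ε_i ∈ {±1} such that Σ ε_i σ_i = j. -/
/-- `σ` (indices `0..n`) is a changemaker vector: `σ 0 ≤ 1` and
`σ (i-1) ≤ σ i ≤ σ 0 + ... + σ (i-1) + 1` for `1 ≤ i ≤ n`. -/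
def IsChangemaker (n : ℕ) (σ : ℕ → ℕ) : Prop :=
  σ 0 ≤ 1 ∧ ∀ i, 1 ≤ i → i ≤ n →
    σ (i - 1) ≤ σ i ∧ σ i ≤ (∑ j ∈ Finset.range i, σ j) + 1

private lemma cm_mono_le {n : ℕ} {σ : ℕ → ℕ} (hmono : ∀ i, i < n → σ i ≤ σ (i + 1)) :
    ∀ i k, i ≤ k → k ≤ n → σ i ≤ σ k := by
  intro i k
  induction k with
  | zero => intro h _; interval_cases i; exact le_rfl
  | succ m ih =>
    intro hik hkn
    rcases Nat.lt_or_ge i (m + 1) with h | h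
    · exact (ih (by omega) (by omega)).trans (hmono m (by omega))
    · have : i = m + 1 := by omega
      subst this; exact le_rfl

private lemma cm_complete (σ : ℕ → ℕ) (m : ℕ)
    (h : ∀ i, i < m → σ i ≤ (∑ j ∈ Finset.range i, σ j) + 1) :
    ∀ t, t ≤ ∑ j ∈ Finset.range m, σ j →
      ∃ A ⊆ Finset.range m, ∑ i ∈ A, σ i = t := by
  induction m with
  | zero =>
    intro t ht
    simp only [Finset.range_zero, Finset.sum_empty, Nat.le_zero] at ht
    exact ⟨∅, by simp, by simp [ht]⟩
  | succ m ih =>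
    intro t ht
    rw [Finset.sum_range_succ] at ht
    by_cases hc : t ≤ ∑ j ∈ Finset.range m, σ j
    · obtain ⟨A, hA, hsum⟩ := ih (fun i hi => h i (by omega)) t hc
      exact ⟨A, hA.trans (Finset.range_subset_range.mpr (by omega)), hsum⟩
    · have hσ := h m (by omega)
      obtain ⟨A, hA, hsum⟩ := ih (fun i hi => h i (by omega)) (t - σ m) (by omega)
      have hmA : m ∉ A := fun hm => by
        have := hA hm; simp [Finset.mem_range] at this
      refine ⟨insert m A, ?_, ?_⟩
      · intro x hx
        rcases Finset.mem_insert.mp hx with h' | h'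
        · simp [h']
        · have := hA h'; simp [Finset.mem_range] at this ⊢; omega
      · rw [Finset.sum_insert hmA, hsum]; omega

theorem stmt_4 (n : ℕ) (σ : ℕ → ℕ) (hmono : ∀ i, i < n → σ i ≤ σ (i + 1)) :
    IsChangemaker n σ ↔
      ∀ j : ℤ, |j| ≤ (∑ i ∈ Finset.range (n + 1), (σ i : ℤ)) →
        j % 2 = (∑ i ∈ Finset.range (n + 1), (σ i : ℤ)) % 2 →
        ∃ ε : ℕ → ℤ, (∀ i ≤ n, ε i = 1 ∨ ε i = -1) ∧
          ∑ i ∈ Finset.range (n + 1), ε i * (σ i : ℤ) = j := by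
  set N : ℕ := ∑ i ∈ Finset.range (n + 1), σ i with hN
  have hcast : (∑ i ∈ Finset.range (n + 1), (σ i : ℤ)) = (N : ℤ) := by
    push_cast [hN]; ring
  constructor
  · rintro ⟨h0, h1⟩ j hj hpar
    rw [hcast] at hj hpar
    rw [abs_le] at hj
    -- parity: N - j is even
    have heven : ∃ k : ℤ, (N : ℤ) - j = 2 * k ∧ 0 ≤ k ∧ k ≤ (N : ℤ) := by
      refine ⟨((N : ℤ) - j) / 2, ?_, ?_, ?_⟩ <;> omega
    obtain ⟨k, hk, hk0, hkN⟩ := heven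
    set t : ℕ := k.toNat with htdef
    have htk : (t : ℤ) = k := Int.toNat_of_nonneg hk0
    have htN : t ≤ N := by omega
    have hcond : ∀ i, i < n + 1 → σ i ≤ (∑ j ∈ Finset.range i, σ j) + 1 := by
      intro i hi
      rcases Nat.eq_zero_or_pos i with h | h
      · subst h; simpa using h0
      · exact (h1 i h (by omega)).2
    obtain ⟨A, hA, hsum⟩ := cm_complete σ (n + 1) hcond t htN
    refine ⟨fun i => if i ∈ A then -1 else 1, fun i _ => by by_cases h : i ∈ A <;> simp [h], ?_⟩
    have hsplit :
        ∑ i ∈ Finset.range (n + 1), (if i ∈ A then (-1 : ℤ) else 1) * (σ i : ℤ)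
          = ∑ i ∈ Finset.range (n + 1) \ A, (if i ∈ A then (-1 : ℤ) else 1) * (σ i : ℤ)
            + ∑ i ∈ A, (if i ∈ A then (-1 : ℤ) else 1) * (σ i : ℤ) :=
      (Finset.sum_sdiff hA).symm
    rw [hsplit]
    have e1 : ∑ i ∈ Finset.range (n + 1) \ A, (if i ∈ A then (-1 : ℤ) else 1) * (σ i : ℤ)
        = ∑ i ∈ Finset.range (n + 1) \ A, (σ i : ℤ) := by
      apply Finset.sum_congr rfl
      intro i hi
      have : i ∉ A := (Finset.mem_sdiff.mp hi).2
      simp [this]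
    have e2 : ∑ i ∈ A, (if i ∈ A then (-1 : ℤ) else 1) * (σ i : ℤ)
        = -∑ i ∈ A, (σ i : ℤ) := by
      rw [← Finset.sum_neg_distrib]
      apply Finset.sum_congr rfl
      intro i hi; simp [hi]
    have e3 : ∑ i ∈ Finset.range (n + 1) \ A, (σ i : ℤ) + ∑ i ∈ A, (σ i : ℤ) = (N : ℤ) := by
      rw [Finset.sum_sdiff hA, hcast]
    have e4 : ∑ i ∈ A, (σ i : ℤ) = (t : ℤ) := by
      rw [← hsum]; push_cast; ring
    rw [e1, e2]
    omega
  · intro h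
    -- derive the subset-sum completeness property
    have C : ∀ t, t ≤ N → ∃ A ⊆ Finset.range (n + 1), ∑ i ∈ A, σ i = t := by
      intro t ht
      obtain ⟨ε, hε, hsum⟩ := h ((N : ℤ) - 2 * t)
        (by rw [hcast, abs_le]; push_cast; omega)
        (by rw [hcast]; omega)
      set A : Finset ℕ := (Finset.range (n + 1)).filter (fun i => ε i = -1) with hAdef
      have hA : A ⊆ Finset.range (n + 1) := Finset.filter_subset _ _
      refine ⟨A, hA, ?_⟩
      have hsplit := Finset.sum_filter_add_sum_filter_not (Finset.range (n + 1))
        (fun i => ε i = -1) (fun i => ε i * (σ i : ℤ))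
      have e1 : ∑ i ∈ A, ε i * (σ i : ℤ) = -∑ i ∈ A, (σ i : ℤ) := by
        rw [← Finset.sum_neg_distrib]
        apply Finset.sum_congr rfl
        intro i hi
        have : ε i = -1 := (Finset.mem_filter.mp hi).2
        rw [this]; ring
      have e2 : ∑ i ∈ (Finset.range (n + 1)).filter (fun i => ¬ ε i = -1), ε i * (σ i : ℤ)
          = ∑ i ∈ (Finset.range (n + 1)).filter (fun i => ¬ ε i = -1), (σ i : ℤ) := by
        apply Finset.sum_congr rfl
        intro i hi
        obtain ⟨hi1, hi2⟩ := Finset.mem_filter.mp hi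
        rcases hε i (by simpa [Nat.lt_succ_iff] using Finset.mem_range.mp hi1) with h' | h'
        · rw [h']; ring
        · exact absurd h' hi2
      have e3 : ∑ i ∈ A, (σ i : ℤ)
          + ∑ i ∈ (Finset.range (n + 1)).filter (fun i => ¬ ε i = -1), (σ i : ℤ) = (N : ℤ) := by
        rw [Finset.sum_filter_add_sum_filter_not, hcast]
      rw [e1, e2] at hsplit
      rw [hsum] at hsplit
      have : (∑ i ∈ A, (σ i : ℤ)) = (t : ℤ) := by omega
      have : ((∑ i ∈ A, σ i : ℕ) : ℤ) = (t : ℤ) := by push_cast; omega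
      exact_mod_cast this
    -- monotone part is free
    have hmle : ∀ i k, i ≤ k → k ≤ n → σ i ≤ σ k := cm_mono_le hmono
    have hNi : ∀ i, i ≤ n → σ i ≤ N := by
      intro i hi
      exact Finset.single_le_sum (f := σ) (fun _ _ => Nat.zero_le _)
        (Finset.mem_range.mpr (by omega))
    constructor
    · by_contra h0
      push_neg at h0
      have h2 : 2 ≤ σ 0 := h0
      have h1N : 1 ≤ N := by have := hNi 0 (Nat.zero_le _); omega
      obtain ⟨A, hA, hsum⟩ := C 1 h1N
      have hne : A.Nonempty := by
        rcases A.eq_empty_or_nonempty with h | h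
        · rw [h] at hsum; simp at hsum
        · exact h
      obtain ⟨i, hi⟩ := hne
      have hile : i ≤ n := by
        have := Finset.mem_range.mp (hA hi); omega
      have h3 : σ i ≤ 1 := by
        rw [← hsum]
        exact Finset.single_le_sum (f := σ) (fun _ _ => Nat.zero_le _) hi
      have := hmle 0 i (Nat.zero_le _) hile
      omega
    · intro i hi1 hin
      constructor
      · have he : i - 1 + 1 = i := by omega
        have hh := hmono (i - 1) (by omega)
        rwa [he] at hh
      · by_contra hb
        push_neg at hb
        have hb' : (∑ j ∈ Finset.range i, σ j) + 2 ≤ σ i := hb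
        set t : ℕ := (∑ j ∈ Finset.range i, σ j) + 1 with htdef
        have htN : t ≤ N := by
          have hsub : ∑ j ∈ Finset.range (i + 1), σ j ≤ N := by
            apply Finset.sum_le_sum_of_subset
            exact Finset.range_subset_range.mpr (by omega)
          rw [Finset.sum_range_succ] at hsub
          omega
        obtain ⟨A, hA, hsum⟩ := C t htN
        have hAri : A ⊆ Finset.range i := by
          intro k hk
          rw [Finset.mem_range]
          by_contra hki
          push_neg at hki
          have hkn : k ≤ n := by have := Finset.mem_range.mp (hA hk); omega
          have h1 : σ i ≤ σ k := hmle i k hki hkn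
          have h2 : σ k ≤ t := by
            rw [← hsum]
            exact Finset.single_le_sum (f := σ) (fun _ _ => Nat.zero_le _) hk
          omega
        have : t ≤ ∑ j ∈ Finset.range i, σ j := by
          rw [← hsum]
          exact Finset.sum_le_sum_of_subset hAri
        omega
end

section
/- Let σ = (1, σ_1, ..., σ_n) be a changemaker vector with some σ_t ≥ 3, and let t be the minimum index with σ_t ≥ 3. Then there exists a subset A ⊆ {0, 1, ..., n} with t ∉ A such that Σ_{k∈A} σ_k = σ_t − 3. -/
lemma cm_rep (n : ℕ) (σ : ℕ → ℕ) (h : IsChangemaker n σ) (h0 : σ 0 = 1) :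
    ∀ i, i ≤ n → ∀ m, m ≤ ∑ j ∈ Finset.range i, σ j →
    ∃ A ⊆ Finset.range i, ∑ k ∈ A, σ k = m := by
  intro i
  induction i with
  | zero =>
    intro _ m hm
    simp at hm
    exact ⟨∅, by simp, by simp [hm]⟩
  | succ i ih =>
    intro hi m hm
    rw [Finset.sum_range_succ] at hm
    by_cases hc : m ≤ ∑ j ∈ Finset.range i, σ j
    · obtain ⟨A, hA, hs⟩ := ih (Nat.le_of_succ_le hi) m hc
      exact ⟨A, hA.trans (Finset.range_subset_range.mpr (Nat.le_succ i)), hs⟩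
    · push_neg at hc
      have hσ : σ i ≤ m := by
        rcases Nat.eq_zero_or_pos i with rfl | hpos
        · simp at hc; omega
        · have := (h.2 i hpos (Nat.le_of_succ_le hi)).2
          omega
      obtain ⟨A, hA, hs⟩ := ih (Nat.le_of_succ_le hi) (m - σ i) (by omega)
      have hiA : i ∉ A := fun hmem => by
        have := hA hmem; simp at this
      refine ⟨insert i A, ?_, ?_⟩
      · intro x hx
        rcases Finset.mem_insert.mp hx with rfl | hx
        · exact Finset.self_mem_range_succ _
        · exact Finset.range_subset_range.mpr (Nat.le_succ i) (hA hx)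
      · rw [Finset.sum_insert hiA, hs]; omega

theorem stmt_6 (n : ℕ) (σ : ℕ → ℕ) (h : IsChangemaker n σ) (h0 : σ 0 = 1)
    (t : ℕ) (ht : t ≤ n) (h3 : 3 ≤ σ t) (hmin : ∀ i < t, σ i < 3) :
    ∃ A ⊆ Finset.range (n + 1), t ∉ A ∧ ∑ k ∈ A, σ k = σ t - 3 := by
  have ht1 : 1 ≤ t := by
    by_contra hlt
    interval_cases t <;> omega
  have hupper : σ t ≤ (∑ j ∈ Finset.range t, σ j) + 1 := (h.2 t ht1 ht).2
  obtain ⟨A, hA, hs⟩ := cm_rep n σ h h0 t ht (σ t - 3) (by omega)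
  refine ⟨A, hA.trans (Finset.range_subset_range.mpr (by omega)), ?_, hs⟩
  intro htA
  have := hA htA
  simp at this
end

section
/- Let Δ(T) = (−1)^r + Σ_{j=1}^{r} (−1)^{j−1}(T^{n_j} + T^{−n_j}) with integers n_1 > n_2 > ... > n_r > 0, and define the torsion coefficients t_i = Σ_{j≥1} j·a_{i+j} where a_m is the coefficient of T^m in Δ(T). Then for every i ≥ 0, t_i − t_{i+1} = Σ_{j : n_j ≥ i+1} (−1)^{j−1}, and this quantity equals 0 or 1. -/
/-- Coefficient `a_m` of `T^m` in `Δ(T) = (-1)^r + ∑_{j=1}^r (-1)^{j-1}(T^{n_j} + T^{-n_j})`. -/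
def coeff (r : ℕ) (nn : ℕ → ℕ) (m : ℤ) : ℤ :=
  (if m = 0 then (-1 : ℤ) ^ r else 0) +
    ∑ j ∈ Finset.Icc 1 r, if (nn j : ℤ) = |m| then (-1 : ℤ) ^ (j - 1) else 0

/-- The `i`-th torsion coefficient `t_i = ∑_{j ≥ 1} j · a_{i+j}`. -/
def tors (r : ℕ) (nn : ℕ → ℕ) (i : ℕ) : ℤ :=
  ∑ j ∈ Finset.range (nn 1 + 1), (j : ℤ) * coeff r nn ((i : ℤ) + j)

/-- The exponent data of a Laurent polynomial of L-space-knot form: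
`n_1 > n_2 > ... > n_r > 0`. -/
def LSpaceForm (r : ℕ) (nn : ℕ → ℕ) : Prop :=
  1 ≤ r ∧ (∀ j, 1 ≤ j → j ≤ r → 0 < nn j) ∧ ∀ j, 1 ≤ j → j + 1 ≤ r → nn (j + 1) < nn j

lemma nn_anti {r : ℕ} {nn : ℕ → ℕ} (h : LSpaceForm r nn) :
    ∀ a b, 1 ≤ a → a ≤ b → b ≤ r → nn b ≤ nn a := by
  intro a b ha hab hbr
  induction b, hab using Nat.le_induction with
  | base => exact le_rfl
  | succ b hab ih =>
    exact le_trans (le_of_lt (h.2.2 b (by omega) (by omega))) (ih (by omega))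

lemma coeff_big {r : ℕ} {nn : ℕ → ℕ} (h : LSpaceForm r nn) (m : ℤ)
    (hm : (nn 1 : ℤ) < m) : coeff r nn m = 0 := by
  have h0 : (0:ℤ) ≤ (nn 1 : ℤ) := Int.natCast_nonneg _
  unfold coeff
  rw [if_neg (by omega), Finset.sum_eq_zero, add_zero]
  intro j hj
  rw [Finset.mem_Icc] at hj
  have : nn j ≤ nn 1 := nn_anti h 1 j le_rfl hj.1 hj.2
  rw [if_neg]
  rw [abs_of_pos (by omega)]
  omega

lemma coeff_pos {r : ℕ} {nn : ℕ → ℕ} (m : ℤ) (hm : 0 < m) :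
    coeff r nn m = ∑ j ∈ Finset.Icc 1 r, if (nn j : ℤ) = m then (-1 : ℤ) ^ (j - 1) else 0 := by
  unfold coeff
  rw [if_neg (by omega), zero_add, abs_of_pos hm]

lemma alt_sum : ∀ s : ℕ, (∑ j ∈ Finset.Icc 1 s, (-1 : ℤ) ^ (j - 1)) =
    if Even s then 0 else 1 := by
  intro s
  induction s with
  | zero => simp
  | succ s ih =>
    rw [Finset.sum_Icc_succ_top (by omega), ih]
    have hss : s + 1 - 1 = s := by omega
    rw [hss]
    rcases Nat.even_or_odd s with he | ho
    · simp [he, Nat.even_add_one, he.neg_one_pow]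
    · simp [Nat.not_even_iff_odd.mpr ho, Nat.even_add_one, ho.neg_one_pow]

theorem stmt_7 (r : ℕ) (nn : ℕ → ℕ) (h : LSpaceForm r nn) (i : ℕ) :
    tors r nn i - tors r nn (i + 1) =
      (∑ j ∈ Finset.Icc 1 r, if i + 1 ≤ nn j then (-1 : ℤ) ^ (j - 1) else 0) ∧
    ((∑ j ∈ Finset.Icc 1 r, if i + 1 ≤ nn j then (-1 : ℤ) ^ (j - 1) else 0) = 0 ∨
     (∑ j ∈ Finset.Icc 1 r, if i + 1 ≤ nn j then (-1 : ℤ) ^ (j - 1) else 0) = 1) := by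
  set N := nn 1 with hN
  constructor
  · -- first part
    have h1 : tors r nn i = ∑ j ∈ Finset.range (N + 1),
        ((j : ℤ) + 1) * coeff r nn ((i : ℤ) + 1 + j) := by
      have hext : tors r nn i = ∑ j ∈ Finset.range (N + 1 + 1),
          (j : ℤ) * coeff r nn ((i : ℤ) + j) := by
        rw [Finset.sum_range_succ, coeff_big h _ (by push_cast; omega), mul_zero, add_zero]
        rfl
      rw [hext, Finset.sum_range_succ' (fun j => (j : ℤ) * coeff r nn ((i : ℤ) + j)) (N + 1)]
      simp only [Nat.cast_zero, zero_mul, add_zero]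
      apply Finset.sum_congr rfl
      intro j _
      have : (i : ℤ) + (↑(j + 1)) = (i : ℤ) + 1 + j := by push_cast; ring
      rw [this]
      push_cast
      ring
    have h2 : tors r nn (i + 1) = ∑ j ∈ Finset.range (N + 1),
        (j : ℤ) * coeff r nn ((i : ℤ) + 1 + j) := by
      apply Finset.sum_congr rfl
      intro j _
      have : ((i : ℕ) + 1 : ℕ) + (j : ℤ) = (i : ℤ) + 1 + j := by push_cast; ring
      rw [this]
    rw [h1, h2, ← Finset.sum_sub_distrib]
    have h3 : ∀ j ∈ Finset.range (N + 1),
        ((j : ℤ) + 1) * coeff r nn ((i : ℤ) + 1 + j) - (j : ℤ) * coeff r nn ((i : ℤ) + 1 + j)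
          = coeff r nn ((i : ℤ) + 1 + j) := by
      intro j _; ring
    rw [Finset.sum_congr rfl h3]
    have h4 : ∀ j ∈ Finset.range (N + 1), coeff r nn ((i : ℤ) + 1 + j) =
        ∑ k ∈ Finset.Icc 1 r, if (nn k : ℤ) = (i : ℤ) + 1 + j then (-1 : ℤ) ^ (k - 1) else 0 := by
      intro j _; exact coeff_pos _ (by positivity)
    rw [Finset.sum_congr rfl h4, Finset.sum_comm]
    apply Finset.sum_congr rfl
    intro k hk
    rw [Finset.mem_Icc] at hk
    have hkN : nn k ≤ N := nn_anti h 1 k le_rfl hk.1 hk.2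
    by_cases hik : i + 1 ≤ nn k
    · rw [if_pos hik]
      have h5 : ∀ j ∈ Finset.range (N + 1),
          (if (nn k : ℤ) = (i : ℤ) + 1 + j then (-1 : ℤ) ^ (k - 1) else 0) =
          (if j = nn k - (i + 1) then (-1 : ℤ) ^ (k - 1) else 0) := by
        intro j _
        exact if_congr (by omega) rfl rfl
      rw [Finset.sum_congr rfl h5,
        Finset.sum_ite_eq' (Finset.range (N + 1)) (nn k - (i + 1)) (fun _ => (-1 : ℤ) ^ (k - 1)),
        if_pos (Finset.mem_range.mpr (by omega))]
    · rw [if_neg hik]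
      apply Finset.sum_eq_zero
      intro j _
      exact if_neg (by omega)
  · -- second part
    set s := Nat.findGreatest (fun j => i + 1 ≤ nn j) r with hs
    have hsr : s ≤ r := Nat.findGreatest_le r
    have hiff : ∀ j, 1 ≤ j → j ≤ r → (i + 1 ≤ nn j ↔ j ≤ s) := by
      intro j hj1 hjr
      constructor
      · intro hP; exact Nat.le_findGreatest hjr hP
      · intro hjs
        have hs0 : 0 < s := by omega
        have hPs : i + 1 ≤ nn s :=
          Nat.findGreatest_of_ne_zero (P := fun j => i + 1 ≤ nn j) hs.symm (by omega)
        calc i + 1 ≤ nn s := hPs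
          _ ≤ nn j := nn_anti h j s hj1 hjs hsr
    have hrw : (∑ j ∈ Finset.Icc 1 r, if i + 1 ≤ nn j then (-1 : ℤ) ^ (j - 1) else 0) =
        ∑ j ∈ Finset.Icc 1 s, (-1 : ℤ) ^ (j - 1) := by
      rw [show (Finset.Icc 1 s) = (Finset.Icc 1 r).filter (fun j => j ≤ s) by
        ext x; simp only [Finset.mem_Icc, Finset.mem_filter]; omega,
        Finset.sum_filter]
      apply Finset.sum_congr rfl
      intro j hj
      rw [Finset.mem_Icc] at hj
      exact if_congr (hiff j hj.1 hj.2) rfl rfl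
    rw [hrw, alt_sum]
    by_cases he : Even s <;> simp [he]
end

section
/- With Δ(T) and torsion coefficients t_i as above, the sequence (t_i)_{i≥0} is a non-increasing sequence of nonnegative integers, and t_i = 0 if and only if i ≥ n_1. -/
lemma alt_aux : ∀ (r : ℕ) (g : ℕ → ℤ),
    (∀ j, j + 1 < r → g (j + 1) ≤ g j) → (∀ j, j < r → 0 ≤ g j) →
    0 ≤ (∑ j ∈ Finset.range r, (-1 : ℤ) ^ j * g j) ∧
      (∑ j ∈ Finset.range r, (-1 : ℤ) ^ j * g j) ≤ max (g 0) 0 := by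
  intro r
  induction r with
  | zero => intro g _ _; simp
  | succ n ih =>
    intro g hanti hpos
    have key : (∑ j ∈ Finset.range (n + 1), (-1 : ℤ) ^ j * g j)
        = g 0 - ∑ j ∈ Finset.range n, (-1 : ℤ) ^ j * g (j + 1) := by
      rw [Finset.sum_range_succ' (fun j => (-1 : ℤ) ^ j * g j) n]
      rw [show (∑ i ∈ Finset.range n, (-1:ℤ)^(i+1) * g (i+1))
          = -∑ i ∈ Finset.range n, (-1:ℤ)^i * g (i+1) by
        rw [← Finset.sum_neg_distrib]
        exact Finset.sum_congr rfl (fun i _ => by ring)]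
      ring
    have ihs := ih (fun j => g (j + 1)) (fun j hj => hanti (j + 1) (by omega))
      (fun j hj => hpos (j + 1) (by omega))
    have h0 : 0 ≤ g 0 := hpos 0 (by omega)
    rcases Nat.eq_zero_or_pos n with hn | hn
    · subst hn
      rw [key]
      simp only [Finset.range_zero, Finset.sum_empty, sub_zero]
      exact ⟨h0, le_max_left _ _⟩
    · have h1 : g 1 ≤ g 0 := hanti 0 (by omega)
      have h1p : 0 ≤ g 1 := hpos 1 (by omega)
      have hub : (∑ j ∈ Finset.range n, (-1:ℤ)^j * g (j+1)) ≤ g 1 := by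
        simpa [max_eq_left h1p] using ihs.2
      have hlb : 0 ≤ (∑ j ∈ Finset.range n, (-1:ℤ)^j * g (j+1)) := by
        simpa using ihs.1
      rw [key]
      exact ⟨by omega, le_trans (by omega) (le_max_left (g 0) 0)⟩

lemma nn_le (r : ℕ) (nn : ℕ → ℕ) (h : LSpaceForm r nn) :
    ∀ a b, 1 ≤ a → a ≤ b → b ≤ r → nn b ≤ nn a := by
  intro a b ha hab hbr
  induction b, hab using Nat.le_induction with
  | base => exact le_rfl
  | succ b hb ih =>
    have h1 : nn (b + 1) < nn b := h.2.2 b (by omega) (by omega)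
    have h2 : nn b ≤ nn a := ih (by omega)
    omega

lemma tors_closed (r : ℕ) (nn : ℕ → ℕ) (h : LSpaceForm r nn) (i : ℕ) :
    tors r nn i = ∑ j ∈ Finset.Icc 1 r, (-1 : ℤ) ^ (j - 1) *
      (if i < nn j then ((nn j : ℤ) - i) else 0) := by
  have hle : ∀ j, j ∈ Finset.Icc 1 r → nn j ≤ nn 1 := by
    intro j hj
    rw [Finset.mem_Icc] at hj
    exact nn_le r nn h 1 j le_rfl hj.1 hj.2
  unfold tors coeff
  have step1 : ∀ k ∈ Finset.range (nn 1 + 1),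
      (k : ℤ) * ((if (i : ℤ) + k = 0 then (-1 : ℤ) ^ r else 0) +
        ∑ j ∈ Finset.Icc 1 r, if (nn j : ℤ) = |(i : ℤ) + k| then (-1 : ℤ) ^ (j - 1) else 0)
      = ∑ j ∈ Finset.Icc 1 r, (k : ℤ) * (if (nn j : ℤ) = (i : ℤ) + k then (-1 : ℤ) ^ (j - 1) else 0) := by
    intro k _
    have habs : |(i : ℤ) + k| = (i : ℤ) + k := abs_of_nonneg (by positivity)
    rw [habs, mul_add, Finset.mul_sum]
    have : (k : ℤ) * (if (i : ℤ) + k = 0 then (-1 : ℤ) ^ r else 0) = 0 := by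
      split_ifs with h0
      · have : (k : ℤ) = 0 := by omega
        rw [this, zero_mul]
      · rw [mul_zero]
    rw [this, zero_add]
  rw [Finset.sum_congr rfl step1, Finset.sum_comm]
  refine Finset.sum_congr rfl (fun j hj => ?_)
  have hjle : nn j ≤ nn 1 := hle j hj
  by_cases hij : i < nn j
  · rw [if_pos hij]
    have htrans : (∑ k ∈ Finset.range (nn 1 + 1),
        (k : ℤ) * (if (nn j : ℤ) = (i : ℤ) + k then (-1 : ℤ) ^ (j - 1) else 0))
        = ∑ k ∈ Finset.range (nn 1 + 1),
          (if k = nn j - i then (k : ℤ) * (-1 : ℤ) ^ (j - 1) else 0) := by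
      refine Finset.sum_congr rfl (fun k _ => ?_)
      split_ifs with h1 h2 h2
      · rfl
      · exfalso; omega
      · exfalso; omega
      · rw [mul_zero]
    rw [htrans, Finset.sum_ite_eq' (Finset.range (nn 1 + 1)) (nn j - i)
      (fun k => (k : ℤ) * (-1 : ℤ) ^ (j - 1))]
    rw [if_pos (by rw [Finset.mem_range]; omega)]
    have : ((nn j - i : ℕ) : ℤ) = (nn j : ℤ) - i := by omega
    rw [this]; ring
  · rw [if_neg hij, mul_zero]
    refine Finset.sum_eq_zero (fun k _ => ?_)
    split_ifs with h1
    · have : (k : ℤ) = 0 := by omega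
      rw [this, zero_mul]
    · rw [mul_zero]

lemma sum_shift (r : ℕ) (F : ℕ → ℤ) :
    (∑ j ∈ Finset.Icc 1 r, F j) = ∑ j ∈ Finset.range r, F (j + 1) := by
  induction r with
  | zero => simp
  | succ n ih => rw [Finset.sum_Icc_succ_top (by omega), ih, Finset.sum_range_succ]

lemma tors_range (r : ℕ) (nn : ℕ → ℕ) (h : LSpaceForm r nn) (i : ℕ) :
    tors r nn i = ∑ j ∈ Finset.range r, (-1 : ℤ) ^ j *
      (if i < nn (j + 1) then ((nn (j + 1) : ℤ) - i) else 0) := by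
  rw [tors_closed r nn h i, sum_shift]
  exact Finset.sum_congr rfl (fun j _ => by norm_num)

theorem stmt_8 (r : ℕ) (nn : ℕ → ℕ) (h : LSpaceForm r nn) :
    (∀ i : ℕ, tors r nn (i + 1) ≤ tors r nn i) ∧
    (∀ i : ℕ, 0 ≤ tors r nn i) ∧
    (∀ i : ℕ, tors r nn i = 0 ↔ nn 1 ≤ i) := by
  obtain ⟨hr, hpos, hdec⟩ := h
  have h' : LSpaceForm r nn := ⟨hr, hpos, hdec⟩
  set g : ℕ → ℕ → ℤ := fun i j => if i < nn (j + 1) then ((nn (j + 1) : ℤ) - i) else 0 with hg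
  have hclosed : ∀ i, tors r nn i = ∑ j ∈ Finset.range r, (-1 : ℤ) ^ j * g i j :=
    fun i => tors_range r nn h' i
  have hnn_anti : ∀ j, j + 1 < r → nn (j + 1 + 1) < nn (j + 1) := by
    intro j hj
    exact hdec (j + 1) (by omega) (by omega)
  have hg_anti : ∀ i j, j + 1 < r → g i (j + 1) ≤ g i j := by
    intro i j hj
    have := hnn_anti j hj
    simp only [hg]
    split_ifs <;> omega
  have hg_nonneg : ∀ i j, j < r → 0 ≤ g i j := by
    intro i j _
    simp only [hg]
    split_ifs <;> omega
  have hnonneg : ∀ i : ℕ, 0 ≤ tors r nn i := by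
    intro i
    rw [hclosed]
    exact (alt_aux r (g i) (hg_anti i) (hg_nonneg i)).1
  have hzero : ∀ i : ℕ, nn 1 ≤ i → tors r nn i = 0 := by
    intro i hi
    rw [hclosed]
    refine Finset.sum_eq_zero (fun j hj => ?_)
    rw [Finset.mem_range] at hj
    have : nn (j + 1) ≤ nn 1 := nn_le r nn h' 1 (j + 1) le_rfl (by omega) (by omega)
    have : g i j = 0 := by simp only [hg]; rw [if_neg (by omega)]
    rw [this, mul_zero]
  have hposi : ∀ i : ℕ, i < nn 1 → 0 < tors r nn i := by
    intro i hi
    rw [hclosed]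
    obtain ⟨m, rfl⟩ : ∃ m, r = m + 1 := ⟨r - 1, by omega⟩
    have key : (∑ j ∈ Finset.range (m + 1), (-1 : ℤ) ^ j * g i j)
        = g i 0 - ∑ j ∈ Finset.range m, (-1 : ℤ) ^ j * g i (j + 1) := by
      rw [Finset.sum_range_succ' (fun j => (-1 : ℤ) ^ j * g i j) m]
      rw [show (∑ k ∈ Finset.range m, (-1:ℤ)^(k+1) * g i (k+1))
          = -∑ k ∈ Finset.range m, (-1:ℤ)^k * g i (k+1) by
        rw [← Finset.sum_neg_distrib]
        exact Finset.sum_congr rfl (fun k _ => by ring)]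
      ring
    have hg0 : g i 0 = (nn 1 : ℤ) - i := by simp only [hg]; rw [if_pos hi]
    rcases Nat.eq_zero_or_pos m with hm | hm
    · subst hm
      rw [key]
      simp only [Finset.range_zero, Finset.sum_empty, sub_zero, hg0]
      omega
    · have ihs := alt_aux m (fun j => g i (j + 1))
        (fun j hj => hg_anti i (j + 1) (by omega))
        (fun j hj => hg_nonneg i (j + 1) (by omega))
      have hn2 : nn (1 + 1) < nn 1 := hdec 1 le_rfl (by omega)
      have hg1 : g i 1 ≤ (nn 1 : ℤ) - i - 1 := by
        simp only [hg]
        split_ifs <;> omega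
      have hub : (∑ j ∈ Finset.range m, (-1:ℤ)^j * g i (j+1)) ≤ max (g i 1) 0 := ihs.2
      have : max (g i 1) 0 ≤ (nn 1 : ℤ) - i - 1 := by
        rw [max_le_iff]; constructor <;> omega
      rw [key, hg0]
      omega
  refine ⟨?_, hnonneg, ?_⟩
  · intro i
    rw [← sub_nonneg, hclosed, hclosed, ← Finset.sum_sub_distrib]
    have hstep : ∀ j ∈ Finset.range r,
        (-1 : ℤ) ^ j * g i j - (-1 : ℤ) ^ j * g (i + 1) j
        = (-1 : ℤ) ^ j * (g i j - g (i + 1) j) := fun j _ => by ring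
    rw [Finset.sum_congr rfl hstep]
    refine (alt_aux r (fun j => g i j - g (i + 1) j) ?_ ?_).1
    · intro j hj
      have := hnn_anti j hj
      simp only [hg]
      push_cast
      split_ifs <;> omega
    · intro j _
      simp only [hg]
      push_cast
      split_ifs <;> omega
  · intro i
    constructor
    · intro ht
      by_contra hlt
      have := hposi i (by omega)
      omega
    · exact hzero i
end

section
/- With Δ(T) and torsion coefficients t_i as above, assuming r ≥ 3 and n_2 = n_1 − 1: t_i = 1 if and only if n_3 ≤ i ≤ n_1 − 1. -/
open Finset

private lemma altsum_aux (g : ℕ → ℤ) : ∀ n a : ℕ,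
    (∀ k, a ≤ k → k < a + n → g (k + 1) ≤ g k) →
    (∀ k, a ≤ k → k ≤ a + n → 0 ≤ g k) →
    0 ≤ (∑ k ∈ Icc a (a + n), (-1 : ℤ) ^ (k - a) * g k) ∧
      (∑ k ∈ Icc a (a + n), (-1 : ℤ) ^ (k - a) * g k) ≤ g a := by
  intro n
  induction n with
  | zero =>
    intro a _ hpos
    simp only [Nat.add_zero, Finset.Icc_self, Finset.sum_singleton, Nat.sub_self, pow_zero,
      one_mul]
    exact ⟨hpos a le_rfl le_rfl, le_rfl⟩
  | succ n ih =>
    intro a hmono hpos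
    have hsplit : Icc a (a + (n + 1)) = insert a (Icc (a + 1) (a + 1 + n)) := by
      ext k; simp only [Finset.mem_Icc, Finset.mem_insert]; omega
    have hnot : a ∉ Icc (a + 1) (a + 1 + n) := by
      simp only [Finset.mem_Icc]; omega
    rw [hsplit, Finset.sum_insert hnot]
    have hsign : ∑ k ∈ Icc (a + 1) (a + 1 + n), (-1 : ℤ) ^ (k - a) * g k
        = -∑ k ∈ Icc (a + 1) (a + 1 + n), (-1 : ℤ) ^ (k - (a + 1)) * g k := by
      rw [← Finset.sum_neg_distrib]
      apply Finset.sum_congr rfl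
      intro k hk
      simp only [Finset.mem_Icc] at hk
      have hk' : k - a = (k - (a + 1)) + 1 := by omega
      rw [hk', pow_succ]; ring
    have ihs := ih (a + 1) (fun k hk hk2 => hmono k (by omega) (by omega))
      (fun k hk hk2 => hpos k (by omega) (by omega))
    have ha : 0 ≤ g a := hpos a le_rfl (by omega)
    have hstep : g (a + 1) ≤ g a := hmono a le_rfl (by omega)
    rw [hsign, Nat.sub_self, pow_zero, one_mul]
    constructor
    · linarith [ihs.1, ihs.2]
    · linarith [ihs.1]

private lemma altsum (g : ℕ → ℤ) (a b : ℕ) (hab : a ≤ b)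
    (hm : ∀ k, a ≤ k → k < b → g (k + 1) ≤ g k)
    (hp : ∀ k, a ≤ k → k ≤ b → 0 ≤ g k) :
    0 ≤ (∑ k ∈ Icc a b, (-1 : ℤ) ^ (k - a) * g k) ∧
      (∑ k ∈ Icc a b, (-1 : ℤ) ^ (k - a) * g k) ≤ g a := by
  obtain ⟨n, rfl⟩ := Nat.exists_eq_add_of_le hab
  exact altsum_aux g n a hm hp

private lemma tors_eq (r : ℕ) (nn : ℕ → ℕ) (i : ℕ)
    (hle : ∀ k, 1 ≤ k → k ≤ r → nn k ≤ nn 1) :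
    tors r nn i = ∑ k ∈ Icc 1 r, (-1 : ℤ) ^ (k - 1) * ((nn k - i : ℕ) : ℤ) := by
  unfold tors coeff
  have habs : ∀ j : ℕ, |(i : ℤ) + j| = (i : ℤ) + j := fun j => abs_of_nonneg (by positivity)
  have hdelta : ∀ j ∈ range (nn 1 + 1),
      (j : ℤ) * ((if (i : ℤ) + j = 0 then (-1 : ℤ) ^ r else 0) +
        ∑ k ∈ Icc 1 r, if (nn k : ℤ) = |(i : ℤ) + j| then (-1 : ℤ) ^ (k - 1) else 0)
      = ∑ k ∈ Icc 1 r, (j : ℤ) * (if (nn k : ℤ) = (i : ℤ) + j then (-1 : ℤ) ^ (k - 1) else 0) := by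
    intro j _
    rw [habs j, mul_add, Finset.mul_sum]
    have : (j : ℤ) * (if (i : ℤ) + j = 0 then (-1 : ℤ) ^ r else 0) = 0 := by
      split_ifs with hj
      · have : (j : ℤ) = 0 := by omega
        rw [this, zero_mul]
      · rw [mul_zero]
    rw [this, zero_add]
  rw [Finset.sum_congr rfl hdelta, Finset.sum_comm]
  apply Finset.sum_congr rfl
  intro k hk
  simp only [Finset.mem_Icc] at hk
  by_cases hik : i ≤ nn k
  · rw [Finset.sum_eq_single (nn k - i)]
    · rw [if_pos (by omega)]
      ring
    · intro j hj hne
      rw [if_neg (by intro hc; omega), mul_zero]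
    · intro habs
      exact absurd (Finset.mem_range.mpr (by have := hle k hk.1 hk.2; omega)) habs
  · have h0 : nn k - i = 0 := by omega
    rw [h0, Nat.cast_zero, mul_zero]
    apply Finset.sum_eq_zero
    intro j hj
    rw [if_neg (by intro hc; omega), mul_zero]

theorem stmt_9 (r : ℕ) (nn : ℕ → ℕ) (h : LSpaceForm r nn) (hr : 3 ≤ r)
    (h2 : nn 2 = nn 1 - 1) :
    ∀ i : ℕ, tors r nn i = 1 ↔ nn 3 ≤ i ∧ i ≤ nn 1 - 1 := by
  obtain ⟨hr1, hpos, hdec⟩ := h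
  have hmono : ∀ k, ∀ j, 1 ≤ j → j ≤ k → k ≤ r → nn k ≤ nn j := by
    intro k
    induction k with
    | zero => intro j hj hjk _; omega
    | succ m ih =>
      intro j hj hjk hk
      rcases Nat.eq_or_lt_of_le hjk with he | hl
      · rw [he]
      · have h1 : nn (m + 1) < nn m := hdec m (by omega) (by omega)
        have h2 := ih j hj (by omega) (by omega)
        omega
  have hstrict : ∀ k, ∀ j, 1 ≤ j → j < k → k ≤ r → nn k < nn j := by
    intro k j hj hjk hk
    rcases Nat.exists_eq_add_of_lt hjk with ⟨m, rfl⟩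
    have h1 : nn (j + 1) < nn j := hdec j hj (by omega)
    have h2 := hmono (j + m + 1) (j + 1) (by omega) (by omega) hk
    omega
  intro i
  rw [tors_eq r nn i (fun k hk1 hkr => hmono k 1 le_rfl hk1 hkr)]
  have hsplit : Icc 1 r = insert 1 (insert 2 (Icc 3 r)) := by
    ext k; simp only [Finset.mem_Icc, Finset.mem_insert]; omega
  have hn1 : 1 ∉ insert 2 (Icc 3 r) := by
    simp only [Finset.mem_insert, Finset.mem_Icc]; omega
  have hn2 : 2 ∉ Icc 3 r := by simp only [Finset.mem_Icc]; omega
  rw [hsplit, Finset.sum_insert hn1, Finset.sum_insert hn2]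
  have hs3eq : ∑ k ∈ Icc 3 r, (-1 : ℤ) ^ (k - 1) * ((nn k - i : ℕ) : ℤ)
      = ∑ k ∈ Icc 3 r, (-1 : ℤ) ^ (k - 3) * ((nn k - i : ℕ) : ℤ) := by
    apply Finset.sum_congr rfl
    intro k hk
    simp only [Finset.mem_Icc] at hk
    have : k - 1 = (k - 3) + 2 := by omega
    rw [this, pow_add]; ring
  rw [hs3eq]
  set S := ∑ k ∈ Icc 3 r, (-1 : ℤ) ^ (k - 3) * ((nn k - i : ℕ) : ℤ) with hS
  have h32 : nn 3 < nn 2 := hstrict 3 2 (by omega) (by omega) hr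
  have h21 : nn 2 < nn 1 := hstrict 2 1 (by omega) (by omega) (by omega)
  have h3pos : 0 < nn 3 := hpos 3 (by omega) hr
  by_cases hcase : nn 3 ≤ i
  · -- here all tail terms vanish
    have hS0 : S = 0 := by
      apply Finset.sum_eq_zero
      intro k hk
      simp only [Finset.mem_Icc] at hk
      have := hmono k 3 (by omega) hk.1 hk.2
      have h0 : nn k - i = 0 := by omega
      rw [h0, Nat.cast_zero, mul_zero]
    rw [hS0]
    rw [show ((1:ℕ) - 1) = 0 from rfl, show ((2:ℕ) - 1) = 1 from rfl, pow_zero, pow_one]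
    omega
  · -- i < nn 3 : RHS false, show LHS false via S ≥ 1
    push_neg at hcase
    have hS1 : 1 ≤ S := by
      rcases Nat.eq_or_lt_of_le hr with he | h4
      · -- r = 3
        rw [hS, ← he]
        simp only [Finset.Icc_self, Finset.sum_singleton, Nat.sub_self, pow_zero, one_mul]
        omega
      · -- r ≥ 4
        have hsplit4 : Icc 3 r = insert 3 (Icc 4 r) := by
          ext k; simp only [Finset.mem_Icc, Finset.mem_insert]; omega
        have hn3 : 3 ∉ Icc 4 r := by simp only [Finset.mem_Icc]; omega
        rw [hS, hsplit4, Finset.sum_insert hn3]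
        have hsign : ∑ k ∈ Icc 4 r, (-1 : ℤ) ^ (k - 3) * ((nn k - i : ℕ) : ℤ)
            = -∑ k ∈ Icc 4 r, (-1 : ℤ) ^ (k - 4) * ((nn k - i : ℕ) : ℤ) := by
          rw [← Finset.sum_neg_distrib]
          apply Finset.sum_congr rfl
          intro k hk
          simp only [Finset.mem_Icc] at hk
          have : k - 3 = (k - 4) + 1 := by omega
          rw [this, pow_succ]; ring
        rw [hsign]
        have hbound := altsum (fun k => ((nn k - i : ℕ) : ℤ)) 4 r (by omega)
          (fun k hk hk2 => by
            have := hdec k (by omega) (by omega)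
            show ((nn (k + 1) - i : ℕ) : ℤ) ≤ ((nn k - i : ℕ) : ℤ)
            omega)
          (fun k _ _ => by positivity)
        have hb1 : (0:ℤ) ≤ ∑ k ∈ Icc 4 r, (-1 : ℤ) ^ (k - 4) * ((nn k - i : ℕ) : ℤ) :=
          hbound.1
        have hb2 : (∑ k ∈ Icc 4 r, (-1 : ℤ) ^ (k - 4) * ((nn k - i : ℕ) : ℤ))
            ≤ ((nn 4 - i : ℕ) : ℤ) := hbound.2
        have h43 : nn 4 < nn 3 := hdec 3 (by omega) h4
        rw [show ((3:ℕ) - 3) = 0 from rfl, pow_zero, one_mul]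
        omega
    rw [show ((1:ℕ) - 1) = 0 from rfl, show ((2:ℕ) - 1) = 1 from rfl, pow_zero, pow_one]
    omega
end

section
/- Let σ = (1, 2, 2, ..., 2) ∈ −ℤ^{n+1} with n ≥ 1 copies of 2. Then the orthogonal complement of σ in −ℤ^{n+1} is a rank-n lattice whose Gram matrix with respect to a suitable basis is the tridiagonal matrix with diagonal (−5, −2, ..., −2) and off-diagonal entries 1; i.e., it is isomorphic to the linear lattice Λ(4n+1, n). -/
/-- The tridiagonal matrix with diagonal `d` and sub/super-diagonal entries `1`. -/
def triM (n : ℕ) (d : Fin n → ℤ) : Matrix (Fin n) (Fin n) ℤ :=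
  fun i j => if i = j then d i
    else if (i : ℤ) - (j : ℤ) = 1 ∨ (j : ℤ) - (i : ℤ) = 1 then 1 else 0

lemma sum_pinF {m : ℕ} (t : ℕ) (ht : t < m) (f : Fin m → ℤ) :
    ∑ j : Fin m, (if (j : ℕ) = t then f j else 0) = f ⟨t, ht⟩ := by
  rw [Finset.sum_eq_single (⟨t, ht⟩ : Fin m)]
  · simp
  · intro b _ hb
    rw [if_neg]
    intro hbt; exact hb (Fin.ext hbt)
  · simp

lemma sum_pin {m : ℕ} (t : ℕ) (f : Fin m → ℤ) :
    ∑ j : Fin m, (if t = (j : ℕ) then f j else 0)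
      = if h : t < m then f ⟨t, h⟩ else 0 := by
  split_ifs with h
  · rw [Finset.sum_eq_single (⟨t, h⟩ : Fin m)]
    · simp
    · intro b _ hb
      rw [if_neg]
      intro hbt; exact hb (Fin.ext hbt.symm)
    · simp
  · apply Finset.sum_eq_zero
    intro b _
    rw [if_neg]
    have := b.isLt
    omega

lemma sum_pin' {m : ℕ} (t : ℕ) (f : Fin m → ℤ) :
    ∑ j : Fin m, (if t = (j : ℕ) + 1 then f j else 0)
      = if h : t - 1 < m ∧ 1 ≤ t then f ⟨t - 1, h.1⟩ else 0 := by
  split_ifs with h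
  · rw [Finset.sum_eq_single (⟨t - 1, h.1⟩ : Fin m)]
    · simp only [Fin.val_mk]
      rw [if_pos (by omega)]
    · intro b _ hb
      rw [if_neg]
      have := b.isLt
      intro hbt
      apply hb; apply Fin.ext; simp; omega
    · simp
  · apply Finset.sum_eq_zero
    intro b _
    rw [if_neg]
    have := b.isLt
    omega

lemma sum_two_pins {m : ℕ} (s t : ℕ) (hs : s < m) (ht : t < m) (A B : ℤ)
    (g : Fin m → ℤ) :
    ∑ k : Fin m, ((if (k : ℕ) = s then A else 0) + (if (k : ℕ) = t then B else 0)) * g k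
      = A * g ⟨s, hs⟩ + B * g ⟨t, ht⟩ := by
  simp only [add_mul, ite_mul, zero_mul, Finset.sum_add_distrib]
  rw [sum_pinF s hs (fun k => A * g k), sum_pinF t ht (fun k => B * g k)]

theorem stmt_11 (n : ℕ) (hn : 1 ≤ n) (σ : Fin (n + 1) → ℤ)
    (hσ : ∀ i, σ i = if (i : ℕ) = 0 then 1 else 2) :
    ∃ v : Fin n → (Fin (n + 1) → ℤ),
      LinearIndependent ℤ v ∧
      (∀ x : Fin (n + 1) → ℤ,
        x ∈ Submodule.span ℤ (Set.range v) ↔ -(∑ i, x i * σ i) = 0) ∧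
      ∀ i j : Fin n,
        -(∑ k, v i k * v j k) = triM n (fun i => if (i : ℕ) = 0 then -5 else -2) i j := by
  set a : Fin n → ℤ := fun i => if (i : ℕ) = 0 then 2 else 1 with ha
  set v : Fin n → Fin (n + 1) → ℤ := fun i k =>
    (if (k : ℕ) = (i : ℕ) then a i else 0) +
      (if (k : ℕ) = (i : ℕ) + 1 then -1 else 0) with hv
  have hi1 : ∀ i : Fin n, (i : ℕ) < n + 1 := fun i => by omega
  have hi2 : ∀ i : Fin n, (i : ℕ) + 1 < n + 1 := fun i => by have := i.isLt; omega
  -- evaluation of coordinate sums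
  have hcoord : ∀ (g : Fin n → ℤ) (k : Fin (n + 1)),
      ∑ i : Fin n, g i * v i k
        = (if h : (k : ℕ) < n then g ⟨k, h⟩ * a ⟨k, h⟩ else 0)
          + (if h : (k : ℕ) - 1 < n ∧ 1 ≤ (k : ℕ) then -(g ⟨(k : ℕ) - 1, h.1⟩) else 0) := by
    intro g k
    simp only [hv, mul_add, mul_ite, mul_zero, mul_neg, mul_one, Finset.sum_add_distrib]
    rw [sum_pin (k : ℕ) (fun j => g j * a j), sum_pin' (k : ℕ) (fun j => -(g j))]
  refine ⟨v, ?_, ?_, ?_⟩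
  · -- linear independence
    rw [Fintype.linearIndependent_iff]
    intro g hg
    have key : ∀ t : ℕ, ∀ h : t < n, g ⟨t, h⟩ = 0 := by
      intro t
      induction t with
      | zero =>
        intro h
        have := congrFun hg (⟨0, by omega⟩ : Fin (n + 1))
        simp only [Finset.sum_apply, Pi.smul_apply, smul_eq_mul, Pi.zero_apply] at this
        rw [hcoord] at this
        rw [dif_pos (by simpa using h), dif_neg (by simp)] at this
        simp only [ha, Fin.val_mk, if_pos rfl, add_zero, mul_ite, mul_one, mul_comm] at this
        have hgoal : (2 : ℤ) * g ⟨0, h⟩ = 0 := by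
          simpa using this
        linarith
      | succ t ih =>
        intro h
        have := congrFun hg (⟨t + 1, by omega⟩ : Fin (n + 1))
        simp only [Finset.sum_apply, Pi.smul_apply, smul_eq_mul, Pi.zero_apply] at this
        rw [hcoord] at this
        rw [dif_pos (by simpa using h), dif_pos (by simp; omega)] at this
        simp only [Fin.val_mk, Nat.add_sub_cancel] at this
        have h0 : g ⟨t, by omega⟩ = 0 := ih (by omega)
        rw [h0] at this
        simp only [ha, Fin.val_mk] at this
        rw [if_neg (by omega)] at this
        omega
    intro i
    have := key (i : ℕ) i.isLt
    simpa using this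
  · -- span characterization
    intro x
    rw [neg_eq_zero]
    constructor
    · intro hx
      have hgen : ∀ i : Fin n, ∑ k, v i k * σ k = 0 := by
        intro i
        simp only [hv]
        rw [sum_two_pins (i : ℕ) ((i : ℕ) + 1) (hi1 i) (hi2 i) (a i) (-1) σ]
        rw [hσ, hσ]
        simp only [Fin.val_mk, ha]
        split_ifs <;> first | exact (False.elim ‹False›) | omega
      let L : (Fin (n + 1) → ℤ) →ₗ[ℤ] ℤ :=
        { toFun := fun y => ∑ i, y i * σ i
          map_add' := fun y z => by simp [add_mul, Finset.sum_add_distrib]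
          map_smul' := fun c y => by
            simp [Finset.mul_sum, mul_assoc] }
      have hle : Submodule.span ℤ (Set.range v) ≤ LinearMap.ker L := by
        rw [Submodule.span_le]
        rintro _ ⟨i, rfl⟩
        exact hgen i
      exact hle hx
    · intro hx
      -- partial sums
      set S : ℕ → ℤ := fun t =>
        ∑ m ∈ Finset.univ.filter (fun m : Fin (n + 1) => t < (m : ℕ)), x m with hS
      have hS_top : S n = 0 := by
        simp only [hS]
        apply Finset.sum_eq_zero
        intro b hb
        simp only [Finset.mem_filter] at hb
        have := b.isLt
        omega
      have hS_step : ∀ t : ℕ, ∀ _ht : t < n, S t = x ⟨t + 1, by omega⟩ + S (t + 1) := by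
        intro t ht
        simp only [hS]
        have hins : Finset.univ.filter (fun m : Fin (n + 1) => t < (m : ℕ))
            = insert (⟨t + 1, by omega⟩ : Fin (n + 1))
              (Finset.univ.filter (fun m : Fin (n + 1) => t + 1 < (m : ℕ))) := by
          ext b
          simp only [Finset.mem_filter, Finset.mem_insert, Finset.mem_univ, true_and,
            Fin.ext_iff, Fin.val_mk]
          omega
        rw [hins, Finset.sum_insert (by simp)]
      obtain ⟨z0, hz0⟩ : ∃ z : Fin (n + 1), (z : ℕ) = 0 := ⟨⟨0, by omega⟩, rfl⟩
      have hcon : x z0 + 2 * S 0 = 0 := by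
        have hsplit := Finset.sum_filter_add_sum_filter_not Finset.univ
          (fun m : Fin (n + 1) => 0 < (m : ℕ)) (fun m => x m * σ m)
        have h1 : ∑ m ∈ Finset.univ.filter (fun m : Fin (n + 1) => 0 < (m : ℕ)),
            x m * σ m = 2 * S 0 := by
          simp only [hS]
          rw [Finset.mul_sum]
          apply Finset.sum_congr rfl
          intro b hb
          simp only [Finset.mem_filter] at hb
          rw [hσ, if_neg (by omega)]
          ring
        have h2 : Finset.univ.filter (fun m : Fin (n + 1) => ¬ 0 < (m : ℕ))
            = {z0} := by
          ext b
          simp only [Finset.mem_filter, Finset.mem_singleton, Finset.mem_univ, true_and,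
            Fin.ext_iff, hz0]
          omega
        rw [h1, h2, Finset.sum_singleton, hσ, if_pos hz0, mul_one, hx] at hsplit
        linarith
      have hx_eq : x = ∑ j : Fin n, (-(S (j : ℕ))) • v j := by
        funext k
        rw [Finset.sum_apply]
        simp only [Pi.smul_apply, smul_eq_mul]
        rw [hcoord (fun j => -(S (j : ℕ))) k]
        simp only [ha, Fin.val_mk]
        by_cases hk0 : (k : ℕ) = 0
        · rw [dif_pos (by omega), dif_neg (by omega), if_pos hk0]
          have hkz : k = z0 := Fin.ext (by omega)
          rw [hkz, hz0]
          linarith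
        · by_cases hkn : (k : ℕ) < n
          · rw [dif_pos hkn, dif_pos (by omega), if_neg hk0]
            have hstep := hS_step ((k : ℕ) - 1) (by omega)
            have hkk : (⟨(k : ℕ) - 1 + 1, by omega⟩ : Fin (n + 1)) = k := by
              apply Fin.ext; simp; omega
            rw [hkk] at hstep
            have h3 : (k : ℕ) - 1 + 1 = (k : ℕ) := by omega
            rw [h3] at hstep
            linarith
          · have hkn' : (k : ℕ) = n := by have := k.isLt; omega
            rw [dif_neg (by omega), dif_pos (by omega)]
            have hstep := hS_step (n - 1) (by omega)
            have hkk : (⟨n - 1 + 1, by omega⟩ : Fin (n + 1)) = k := by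
              apply Fin.ext; simp; omega
            rw [hkk] at hstep
            rw [Nat.sub_add_cancel hn, hS_top] at hstep
            have h2 : (k : ℕ) - 1 = n - 1 := by omega
            rw [h2]
            linarith
      rw [hx_eq]
      exact Submodule.sum_mem _ fun j _ =>
        Submodule.smul_mem _ _ (Submodule.subset_span ⟨j, rfl⟩)
  · -- Gram matrix
    intro i j
    simp only [hv]
    rw [sum_two_pins (i : ℕ) ((i : ℕ) + 1) (hi1 i) (hi2 i) (a i) (-1)
      (fun k => (if (k : ℕ) = (j : ℕ) then a j else 0) + (if (k : ℕ) = (j : ℕ) + 1 then -1 else 0))]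
    simp only [hv, Fin.val_mk, ha, triM, Fin.ext_iff]
    have h1 := i.isLt
    have h2 := j.isLt
    split_ifs <;>
      first
        | exact (False.elim ‹False›)
        | omega
        | (push_cast at * ; omega)
        | norm_num
end

section
/- Let σ = (1, 1, 1, 2, ..., 2) ∈ −ℤ^{n+1} with n ≥ 3. Then the orthogonal complement of σ in −ℤ^{n+1} is a rank-n lattice whose Gram matrix with respect to a suitable basis is the tridiagonal matrix with diagonal (−2, −2, −3, −2, ..., −2) and off-diagonal entries 1; i.e., it is isomorphic to the linear lattice Λ(4(n−2)+3, 3(n−2)+2). -/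
namespace S12
def E (N a : ℕ) : Fin N → ℤ := fun k => if (k:ℕ) = a then 1 else 0
def pp (i : ℕ) : ℕ := if i = 0 then 0 else if i = 1 then 1 else if i = 2 then 3 else i+1
def qq (i : ℕ) : ℕ := if i = 0 then 1 else if i = 1 then 2 else if i = 2 then 0 else i
def rr (N i : ℕ) : ℕ := if i = 2 then 1 else N
def vv (m : ℕ) : Fin (m+3) → Fin (m+4) → ℤ :=
  fun i => E (m+4) (pp (i:ℕ)) - E (m+4) (qq (i:ℕ)) - E (m+4) (rr (m+4) (i:ℕ))

lemma vvmk (m : ℕ) (i : Fin (m+3)) (a : ℕ) (h : a < m+4) :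
    vv m i ⟨a,h⟩ = (if a = pp (i:ℕ) then 1 else 0) - (if a = qq (i:ℕ) then 1 else 0)
      - (if a = rr (m+4) (i:ℕ) then 1 else 0) := rfl

lemma sumE (m a : ℕ) (y : Fin (m+4) → ℤ) :
    (∑ k, E (m+4) a k * y k) = if h : a < m+4 then y ⟨a, h⟩ else 0 := by
  unfold E
  split_ifs with h
  · rw [Finset.sum_eq_single (⟨a, h⟩ : Fin (m+4))]
    · simp
    · intro k _ hk
      rw [if_neg, zero_mul]
      intro hk'; exact hk (Fin.ext hk')
    · simp
  · apply Finset.sum_eq_zero; intro k _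
    rw [if_neg, zero_mul]
    have := k.isLt; omega

lemma dot_expand (m : ℕ) (i : Fin (m+3)) (y : Fin (m+4) → ℤ) :
    (∑ k, vv m i k * y k) =
      (if h : pp (i:ℕ) < m+4 then y ⟨pp (i:ℕ), h⟩ else 0)
      - (if h : qq (i:ℕ) < m+4 then y ⟨qq (i:ℕ), h⟩ else 0)
      - (if h : rr (m+4) (i:ℕ) < m+4 then y ⟨rr (m+4) (i:ℕ), h⟩ else 0) := by
  have : ∀ k, vv m i k * y k =
      E (m+4) (pp (i:ℕ)) k * y k - E (m+4) (qq (i:ℕ)) k * y k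
      - E (m+4) (rr (m+4) (i:ℕ)) k * y k := by
    intro k; simp [vv, sub_mul]
  simp only [this, Finset.sum_sub_distrib, sumE]


set_option maxHeartbeats 1000000
lemma gram_00 (m : ℕ) (i j : Fin (m+3)) (h1 : (i:ℕ) = 0) (h2 : (j:ℕ) = 0) :
    -(∑ k, vv m i k * vv m j k) =
      triM (m+3) (fun i => if (i : ℕ) = 2 then -3 else -2) i j := by
  rw [dot_expand]
  have hi := i.isLt; have hj := j.isLt
  have hp1 : pp (i:ℕ) = 0 := by unfold pp; split_ifs <;> omega
  have hq1 : qq (i:ℕ) = 1 := by unfold qq; split_ifs <;> omega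
  have hr1 : rr (m+4) (i:ℕ) = m+4 := by unfold rr; split_ifs <;> omega
  have hp2 : pp (j:ℕ) = 0 := by unfold pp; split_ifs <;> omega
  have hq2 : qq (j:ℕ) = 1 := by unfold qq; split_ifs <;> omega
  have hr2 : rr (m+4) (j:ℕ) = m+4 := by unfold rr; split_ifs <;> omega
  rw [hp1, hq1, hr1]
  rw [dif_pos (by omega), dif_pos (by omega)]
  rw [dif_neg (by omega)]
  simp only [vvmk, hp2, hq2, hr2, triM, Fin.ext_iff, ite_true, ite_false, eq_self_iff_true, if_true, if_false]
  split_ifs <;> first | omega | exact (‹False›).elim | exact absurd trivial ‹¬True›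

lemma gram_01 (m : ℕ) (i j : Fin (m+3)) (h1 : (i:ℕ) = 0) (h2 : (j:ℕ) = 1) :
    -(∑ k, vv m i k * vv m j k) =
      triM (m+3) (fun i => if (i : ℕ) = 2 then -3 else -2) i j := by
  rw [dot_expand]
  have hi := i.isLt; have hj := j.isLt
  have hp1 : pp (i:ℕ) = 0 := by unfold pp; split_ifs <;> omega
  have hq1 : qq (i:ℕ) = 1 := by unfold qq; split_ifs <;> omega
  have hr1 : rr (m+4) (i:ℕ) = m+4 := by unfold rr; split_ifs <;> omega
  have hp2 : pp (j:ℕ) = 1 := by unfold pp; split_ifs <;> omega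
  have hq2 : qq (j:ℕ) = 2 := by unfold qq; split_ifs <;> omega
  have hr2 : rr (m+4) (j:ℕ) = m+4 := by unfold rr; split_ifs <;> omega
  rw [hp1, hq1, hr1]
  rw [dif_pos (by omega), dif_pos (by omega)]
  rw [dif_neg (by omega)]
  simp only [vvmk, hp2, hq2, hr2, triM, Fin.ext_iff, ite_true, ite_false, eq_self_iff_true, if_true, if_false]
  split_ifs <;> first | omega | exact (‹False›).elim | exact absurd trivial ‹¬True›

lemma gram_02 (m : ℕ) (i j : Fin (m+3)) (h1 : (i:ℕ) = 0) (h2 : (j:ℕ) = 2) :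
    -(∑ k, vv m i k * vv m j k) =
      triM (m+3) (fun i => if (i : ℕ) = 2 then -3 else -2) i j := by
  rw [dot_expand]
  have hi := i.isLt; have hj := j.isLt
  have hp1 : pp (i:ℕ) = 0 := by unfold pp; split_ifs <;> omega
  have hq1 : qq (i:ℕ) = 1 := by unfold qq; split_ifs <;> omega
  have hr1 : rr (m+4) (i:ℕ) = m+4 := by unfold rr; split_ifs <;> omega
  have hp2 : pp (j:ℕ) = 3 := by unfold pp; split_ifs <;> omega
  have hq2 : qq (j:ℕ) = 0 := by unfold qq; split_ifs <;> omega
  have hr2 : rr (m+4) (j:ℕ) = 1 := by unfold rr; split_ifs <;> omega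
  rw [hp1, hq1, hr1]
  rw [dif_pos (by omega), dif_pos (by omega)]
  rw [dif_neg (by omega)]
  simp only [vvmk, hp2, hq2, hr2, triM, Fin.ext_iff, ite_true, ite_false, eq_self_iff_true, if_true, if_false]
  split_ifs <;> first | omega | exact (‹False›).elim | exact absurd trivial ‹¬True›

lemma gram_0b (m : ℕ) (i j : Fin (m+3)) (h1 : (i:ℕ) = 0) (h2 : 3 ≤ (j:ℕ)) :
    -(∑ k, vv m i k * vv m j k) =
      triM (m+3) (fun i => if (i : ℕ) = 2 then -3 else -2) i j := by
  rw [dot_expand]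
  have hi := i.isLt; have hj := j.isLt
  have hp1 : pp (i:ℕ) = 0 := by unfold pp; split_ifs <;> omega
  have hq1 : qq (i:ℕ) = 1 := by unfold qq; split_ifs <;> omega
  have hr1 : rr (m+4) (i:ℕ) = m+4 := by unfold rr; split_ifs <;> omega
  have hp2 : pp (j:ℕ) = (j:ℕ)+1 := by unfold pp; split_ifs <;> omega
  have hq2 : qq (j:ℕ) = ((j:ℕ)) := by unfold qq; split_ifs <;> omega
  have hr2 : rr (m+4) (j:ℕ) = m+4 := by unfold rr; split_ifs <;> omega
  rw [hp1, hq1, hr1]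
  rw [dif_pos (by omega), dif_pos (by omega)]
  rw [dif_neg (by omega)]
  simp only [vvmk, hp2, hq2, hr2, triM, Fin.ext_iff, ite_true, ite_false, eq_self_iff_true, if_true, if_false]
  split_ifs <;> first | omega | exact (‹False›).elim | exact absurd trivial ‹¬True›

lemma gram_10 (m : ℕ) (i j : Fin (m+3)) (h1 : (i:ℕ) = 1) (h2 : (j:ℕ) = 0) :
    -(∑ k, vv m i k * vv m j k) =
      triM (m+3) (fun i => if (i : ℕ) = 2 then -3 else -2) i j := by
  rw [dot_expand]
  have hi := i.isLt; have hj := j.isLt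
  have hp1 : pp (i:ℕ) = 1 := by unfold pp; split_ifs <;> omega
  have hq1 : qq (i:ℕ) = 2 := by unfold qq; split_ifs <;> omega
  have hr1 : rr (m+4) (i:ℕ) = m+4 := by unfold rr; split_ifs <;> omega
  have hp2 : pp (j:ℕ) = 0 := by unfold pp; split_ifs <;> omega
  have hq2 : qq (j:ℕ) = 1 := by unfold qq; split_ifs <;> omega
  have hr2 : rr (m+4) (j:ℕ) = m+4 := by unfold rr; split_ifs <;> omega
  rw [hp1, hq1, hr1]
  rw [dif_pos (by omega), dif_pos (by omega)]
  rw [dif_neg (by omega)]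
  simp only [vvmk, hp2, hq2, hr2, triM, Fin.ext_iff, ite_true, ite_false, eq_self_iff_true, if_true, if_false]
  split_ifs <;> first | omega | exact (‹False›).elim | exact absurd trivial ‹¬True›

lemma gram_11 (m : ℕ) (i j : Fin (m+3)) (h1 : (i:ℕ) = 1) (h2 : (j:ℕ) = 1) :
    -(∑ k, vv m i k * vv m j k) =
      triM (m+3) (fun i => if (i : ℕ) = 2 then -3 else -2) i j := by
  rw [dot_expand]
  have hi := i.isLt; have hj := j.isLt
  have hp1 : pp (i:ℕ) = 1 := by unfold pp; split_ifs <;> omega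
  have hq1 : qq (i:ℕ) = 2 := by unfold qq; split_ifs <;> omega
  have hr1 : rr (m+4) (i:ℕ) = m+4 := by unfold rr; split_ifs <;> omega
  have hp2 : pp (j:ℕ) = 1 := by unfold pp; split_ifs <;> omega
  have hq2 : qq (j:ℕ) = 2 := by unfold qq; split_ifs <;> omega
  have hr2 : rr (m+4) (j:ℕ) = m+4 := by unfold rr; split_ifs <;> omega
  rw [hp1, hq1, hr1]
  rw [dif_pos (by omega), dif_pos (by omega)]
  rw [dif_neg (by omega)]
  simp only [vvmk, hp2, hq2, hr2, triM, Fin.ext_iff, ite_true, ite_false, eq_self_iff_true, if_true, if_false]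
  split_ifs <;> first | omega | exact (‹False›).elim | exact absurd trivial ‹¬True›

lemma gram_12 (m : ℕ) (i j : Fin (m+3)) (h1 : (i:ℕ) = 1) (h2 : (j:ℕ) = 2) :
    -(∑ k, vv m i k * vv m j k) =
      triM (m+3) (fun i => if (i : ℕ) = 2 then -3 else -2) i j := by
  rw [dot_expand]
  have hi := i.isLt; have hj := j.isLt
  have hp1 : pp (i:ℕ) = 1 := by unfold pp; split_ifs <;> omega
  have hq1 : qq (i:ℕ) = 2 := by unfold qq; split_ifs <;> omega
  have hr1 : rr (m+4) (i:ℕ) = m+4 := by unfold rr; split_ifs <;> omega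
  have hp2 : pp (j:ℕ) = 3 := by unfold pp; split_ifs <;> omega
  have hq2 : qq (j:ℕ) = 0 := by unfold qq; split_ifs <;> omega
  have hr2 : rr (m+4) (j:ℕ) = 1 := by unfold rr; split_ifs <;> omega
  rw [hp1, hq1, hr1]
  rw [dif_pos (by omega), dif_pos (by omega)]
  rw [dif_neg (by omega)]
  simp only [vvmk, hp2, hq2, hr2, triM, Fin.ext_iff, ite_true, ite_false, eq_self_iff_true, if_true, if_false]
  split_ifs <;> first | omega | exact (‹False›).elim | exact absurd trivial ‹¬True›

lemma gram_1b (m : ℕ) (i j : Fin (m+3)) (h1 : (i:ℕ) = 1) (h2 : 3 ≤ (j:ℕ)) :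
    -(∑ k, vv m i k * vv m j k) =
      triM (m+3) (fun i => if (i : ℕ) = 2 then -3 else -2) i j := by
  rw [dot_expand]
  have hi := i.isLt; have hj := j.isLt
  have hp1 : pp (i:ℕ) = 1 := by unfold pp; split_ifs <;> omega
  have hq1 : qq (i:ℕ) = 2 := by unfold qq; split_ifs <;> omega
  have hr1 : rr (m+4) (i:ℕ) = m+4 := by unfold rr; split_ifs <;> omega
  have hp2 : pp (j:ℕ) = (j:ℕ)+1 := by unfold pp; split_ifs <;> omega
  have hq2 : qq (j:ℕ) = ((j:ℕ)) := by unfold qq; split_ifs <;> omega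
  have hr2 : rr (m+4) (j:ℕ) = m+4 := by unfold rr; split_ifs <;> omega
  rw [hp1, hq1, hr1]
  rw [dif_pos (by omega), dif_pos (by omega)]
  rw [dif_neg (by omega)]
  simp only [vvmk, hp2, hq2, hr2, triM, Fin.ext_iff, ite_true, ite_false, eq_self_iff_true, if_true, if_false]
  split_ifs <;> first | omega | exact (‹False›).elim | exact absurd trivial ‹¬True›

lemma gram_20 (m : ℕ) (i j : Fin (m+3)) (h1 : (i:ℕ) = 2) (h2 : (j:ℕ) = 0) :
    -(∑ k, vv m i k * vv m j k) =
      triM (m+3) (fun i => if (i : ℕ) = 2 then -3 else -2) i j := by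
  rw [dot_expand]
  have hi := i.isLt; have hj := j.isLt
  have hp1 : pp (i:ℕ) = 3 := by unfold pp; split_ifs <;> omega
  have hq1 : qq (i:ℕ) = 0 := by unfold qq; split_ifs <;> omega
  have hr1 : rr (m+4) (i:ℕ) = 1 := by unfold rr; split_ifs <;> omega
  have hp2 : pp (j:ℕ) = 0 := by unfold pp; split_ifs <;> omega
  have hq2 : qq (j:ℕ) = 1 := by unfold qq; split_ifs <;> omega
  have hr2 : rr (m+4) (j:ℕ) = m+4 := by unfold rr; split_ifs <;> omega
  rw [hp1, hq1, hr1]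
  rw [dif_pos (by omega), dif_pos (by omega)]
  rw [dif_pos (by omega)]
  simp only [vvmk, hp2, hq2, hr2, triM, Fin.ext_iff, ite_true, ite_false, eq_self_iff_true, if_true, if_false]
  split_ifs <;> first | omega | exact (‹False›).elim | exact absurd trivial ‹¬True›

lemma gram_21 (m : ℕ) (i j : Fin (m+3)) (h1 : (i:ℕ) = 2) (h2 : (j:ℕ) = 1) :
    -(∑ k, vv m i k * vv m j k) =
      triM (m+3) (fun i => if (i : ℕ) = 2 then -3 else -2) i j := by
  rw [dot_expand]
  have hi := i.isLt; have hj := j.isLt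
  have hp1 : pp (i:ℕ) = 3 := by unfold pp; split_ifs <;> omega
  have hq1 : qq (i:ℕ) = 0 := by unfold qq; split_ifs <;> omega
  have hr1 : rr (m+4) (i:ℕ) = 1 := by unfold rr; split_ifs <;> omega
  have hp2 : pp (j:ℕ) = 1 := by unfold pp; split_ifs <;> omega
  have hq2 : qq (j:ℕ) = 2 := by unfold qq; split_ifs <;> omega
  have hr2 : rr (m+4) (j:ℕ) = m+4 := by unfold rr; split_ifs <;> omega
  rw [hp1, hq1, hr1]
  rw [dif_pos (by omega), dif_pos (by omega)]
  rw [dif_pos (by omega)]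
  simp only [vvmk, hp2, hq2, hr2, triM, Fin.ext_iff, ite_true, ite_false, eq_self_iff_true, if_true, if_false]
  split_ifs <;> first | omega | exact (‹False›).elim | exact absurd trivial ‹¬True›

lemma gram_22 (m : ℕ) (i j : Fin (m+3)) (h1 : (i:ℕ) = 2) (h2 : (j:ℕ) = 2) :
    -(∑ k, vv m i k * vv m j k) =
      triM (m+3) (fun i => if (i : ℕ) = 2 then -3 else -2) i j := by
  rw [dot_expand]
  have hi := i.isLt; have hj := j.isLt
  have hp1 : pp (i:ℕ) = 3 := by unfold pp; split_ifs <;> omega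
  have hq1 : qq (i:ℕ) = 0 := by unfold qq; split_ifs <;> omega
  have hr1 : rr (m+4) (i:ℕ) = 1 := by unfold rr; split_ifs <;> omega
  have hp2 : pp (j:ℕ) = 3 := by unfold pp; split_ifs <;> omega
  have hq2 : qq (j:ℕ) = 0 := by unfold qq; split_ifs <;> omega
  have hr2 : rr (m+4) (j:ℕ) = 1 := by unfold rr; split_ifs <;> omega
  rw [hp1, hq1, hr1]
  rw [dif_pos (by omega), dif_pos (by omega)]
  rw [dif_pos (by omega)]
  simp only [vvmk, hp2, hq2, hr2, triM, Fin.ext_iff, ite_true, ite_false, eq_self_iff_true, if_true, if_false]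
  split_ifs <;> first | omega | exact (‹False›).elim | exact absurd trivial ‹¬True›

lemma gram_2b (m : ℕ) (i j : Fin (m+3)) (h1 : (i:ℕ) = 2) (h2 : 3 ≤ (j:ℕ)) :
    -(∑ k, vv m i k * vv m j k) =
      triM (m+3) (fun i => if (i : ℕ) = 2 then -3 else -2) i j := by
  rw [dot_expand]
  have hi := i.isLt; have hj := j.isLt
  have hp1 : pp (i:ℕ) = 3 := by unfold pp; split_ifs <;> omega
  have hq1 : qq (i:ℕ) = 0 := by unfold qq; split_ifs <;> omega
  have hr1 : rr (m+4) (i:ℕ) = 1 := by unfold rr; split_ifs <;> omega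
  have hp2 : pp (j:ℕ) = (j:ℕ)+1 := by unfold pp; split_ifs <;> omega
  have hq2 : qq (j:ℕ) = ((j:ℕ)) := by unfold qq; split_ifs <;> omega
  have hr2 : rr (m+4) (j:ℕ) = m+4 := by unfold rr; split_ifs <;> omega
  rw [hp1, hq1, hr1]
  rw [dif_pos (by omega), dif_pos (by omega)]
  rw [dif_pos (by omega)]
  simp only [vvmk, hp2, hq2, hr2, triM, Fin.ext_iff, ite_true, ite_false, eq_self_iff_true, if_true, if_false]
  split_ifs <;> first | omega | exact (‹False›).elim | exact absurd trivial ‹¬True›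

lemma gram_b0 (m : ℕ) (i j : Fin (m+3)) (h1 : 3 ≤ (i:ℕ)) (h2 : (j:ℕ) = 0) :
    -(∑ k, vv m i k * vv m j k) =
      triM (m+3) (fun i => if (i : ℕ) = 2 then -3 else -2) i j := by
  rw [dot_expand]
  have hi := i.isLt; have hj := j.isLt
  have hp1 : pp (i:ℕ) = (i:ℕ)+1 := by unfold pp; split_ifs <;> omega
  have hq1 : qq (i:ℕ) = ((i:ℕ)) := by unfold qq; split_ifs <;> omega
  have hr1 : rr (m+4) (i:ℕ) = m+4 := by unfold rr; split_ifs <;> omega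
  have hp2 : pp (j:ℕ) = 0 := by unfold pp; split_ifs <;> omega
  have hq2 : qq (j:ℕ) = 1 := by unfold qq; split_ifs <;> omega
  have hr2 : rr (m+4) (j:ℕ) = m+4 := by unfold rr; split_ifs <;> omega
  rw [hp1, hq1, hr1]
  rw [dif_pos (by omega), dif_pos (by omega)]
  rw [dif_neg (by omega)]
  simp only [vvmk, hp2, hq2, hr2, triM, Fin.ext_iff, ite_true, ite_false, eq_self_iff_true, if_true, if_false]
  split_ifs <;> first | omega | exact (‹False›).elim | exact absurd trivial ‹¬True›

lemma gram_b1 (m : ℕ) (i j : Fin (m+3)) (h1 : 3 ≤ (i:ℕ)) (h2 : (j:ℕ) = 1) :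
    -(∑ k, vv m i k * vv m j k) =
      triM (m+3) (fun i => if (i : ℕ) = 2 then -3 else -2) i j := by
  rw [dot_expand]
  have hi := i.isLt; have hj := j.isLt
  have hp1 : pp (i:ℕ) = (i:ℕ)+1 := by unfold pp; split_ifs <;> omega
  have hq1 : qq (i:ℕ) = ((i:ℕ)) := by unfold qq; split_ifs <;> omega
  have hr1 : rr (m+4) (i:ℕ) = m+4 := by unfold rr; split_ifs <;> omega
  have hp2 : pp (j:ℕ) = 1 := by unfold pp; split_ifs <;> omega
  have hq2 : qq (j:ℕ) = 2 := by unfold qq; split_ifs <;> omega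
  have hr2 : rr (m+4) (j:ℕ) = m+4 := by unfold rr; split_ifs <;> omega
  rw [hp1, hq1, hr1]
  rw [dif_pos (by omega), dif_pos (by omega)]
  rw [dif_neg (by omega)]
  simp only [vvmk, hp2, hq2, hr2, triM, Fin.ext_iff, ite_true, ite_false, eq_self_iff_true, if_true, if_false]
  split_ifs <;> first | omega | exact (‹False›).elim | exact absurd trivial ‹¬True›

lemma gram_b2 (m : ℕ) (i j : Fin (m+3)) (h1 : 3 ≤ (i:ℕ)) (h2 : (j:ℕ) = 2) :
    -(∑ k, vv m i k * vv m j k) =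
      triM (m+3) (fun i => if (i : ℕ) = 2 then -3 else -2) i j := by
  rw [dot_expand]
  have hi := i.isLt; have hj := j.isLt
  have hp1 : pp (i:ℕ) = (i:ℕ)+1 := by unfold pp; split_ifs <;> omega
  have hq1 : qq (i:ℕ) = ((i:ℕ)) := by unfold qq; split_ifs <;> omega
  have hr1 : rr (m+4) (i:ℕ) = m+4 := by unfold rr; split_ifs <;> omega
  have hp2 : pp (j:ℕ) = 3 := by unfold pp; split_ifs <;> omega
  have hq2 : qq (j:ℕ) = 0 := by unfold qq; split_ifs <;> omega
  have hr2 : rr (m+4) (j:ℕ) = 1 := by unfold rr; split_ifs <;> omega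
  rw [hp1, hq1, hr1]
  rw [dif_pos (by omega), dif_pos (by omega)]
  rw [dif_neg (by omega)]
  simp only [vvmk, hp2, hq2, hr2, triM, Fin.ext_iff, ite_true, ite_false, eq_self_iff_true, if_true, if_false]
  split_ifs <;> first | omega | exact (‹False›).elim | exact absurd trivial ‹¬True›

lemma gram_bb (m : ℕ) (i j : Fin (m+3)) (h1 : 3 ≤ (i:ℕ)) (h2 : 3 ≤ (j:ℕ)) :
    -(∑ k, vv m i k * vv m j k) =
      triM (m+3) (fun i => if (i : ℕ) = 2 then -3 else -2) i j := by
  rw [dot_expand]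
  have hi := i.isLt; have hj := j.isLt
  have hp1 : pp (i:ℕ) = (i:ℕ)+1 := by unfold pp; split_ifs <;> omega
  have hq1 : qq (i:ℕ) = ((i:ℕ)) := by unfold qq; split_ifs <;> omega
  have hr1 : rr (m+4) (i:ℕ) = m+4 := by unfold rr; split_ifs <;> omega
  have hp2 : pp (j:ℕ) = (j:ℕ)+1 := by unfold pp; split_ifs <;> omega
  have hq2 : qq (j:ℕ) = ((j:ℕ)) := by unfold qq; split_ifs <;> omega
  have hr2 : rr (m+4) (j:ℕ) = m+4 := by unfold rr; split_ifs <;> omega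
  rw [hp1, hq1, hr1]
  rw [dif_pos (by omega), dif_pos (by omega)]
  rw [dif_neg (by omega)]
  simp only [vvmk, hp2, hq2, hr2, triM, Fin.ext_iff, ite_true, ite_false, eq_self_iff_true, if_true, if_false]
  split_ifs <;> first | omega | exact (‹False›).elim | exact absurd trivial ‹¬True›

lemma gram (m : ℕ) (i j : Fin (m+3)) :
    -(∑ k, vv m i k * vv m j k) =
      triM (m+3) (fun i => if (i : ℕ) = 2 then -3 else -2) i j := by
  have hcase : ∀ l : Fin (m+3), (l:ℕ) = 0 ∨ (l:ℕ) = 1 ∨ (l:ℕ) = 2 ∨ 3 ≤ (l:ℕ) := fun l => by omega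
  rcases hcase i with h1 | h1 | h1 | h1 <;> rcases hcase j with h2 | h2 | h2 | h2
  · exact gram_00 m i j h1 h2
  · exact gram_01 m i j h1 h2
  · exact gram_02 m i j h1 h2
  · exact gram_0b m i j h1 h2
  · exact gram_10 m i j h1 h2
  · exact gram_11 m i j h1 h2
  · exact gram_12 m i j h1 h2
  · exact gram_1b m i j h1 h2
  · exact gram_20 m i j h1 h2
  · exact gram_21 m i j h1 h2
  · exact gram_22 m i j h1 h2
  · exact gram_2b m i j h1 h2
  · exact gram_b0 m i j h1 h2
  · exact gram_b1 m i j h1 h2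
  · exact gram_b2 m i j h1 h2
  · exact gram_bb m i j h1 h2

lemma vv_eq_zero (m : ℕ) (i : Fin (m+3)) (a : ℕ) (h : a < m+4)
    (h1 : a ≠ pp (i:ℕ)) (h2 : a ≠ qq (i:ℕ)) (h3 : a ≠ rr (m+4) (i:ℕ)) :
    vv m i ⟨a,h⟩ = 0 := by
  rw [vvmk, if_neg h1, if_neg h2, if_neg h3]; ring

lemma sum_one (m : ℕ) (f : Fin (m+3) → ℤ) (i0 : Fin (m+3))
    (hz : ∀ i, i ≠ i0 → f i = 0) : ∑ i, f i = f i0 :=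
  Finset.sum_eq_single i0 (fun b _ hb => hz b hb) (by simp)

lemma sum_two (m : ℕ) (f : Fin (m+3) → ℤ) (i0 i1 : Fin (m+3)) (hne : i0 ≠ i1)
    (hz : ∀ i, i ≠ i0 → i ≠ i1 → f i = 0) : ∑ i, f i = f i0 + f i1 := by
  rw [← Finset.sum_pair hne]
  refine (Finset.sum_subset (Finset.subset_univ _) ?_).symm
  intro x _ hx
  simp only [Finset.mem_insert, Finset.mem_singleton, not_or] at hx
  exact hz x hx.1 hx.2

lemma sum_three (m : ℕ) (f : Fin (m+3) → ℤ) (i0 i1 i2 : Fin (m+3))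
    (h01 : i0 ≠ i1) (h02 : i0 ≠ i2) (h12 : i1 ≠ i2)
    (hz : ∀ i, i ≠ i0 → i ≠ i1 → i ≠ i2 → f i = 0) :
    ∑ i, f i = f i0 + f i1 + f i2 := by
  have key : ({i0, i1, i2} : Finset (Fin (m+3))).sum f = f i0 + f i1 + f i2 := by
    rw [Finset.sum_insert (by simp [h01, h02]), Finset.sum_pair h12]; ring
  rw [← key]
  refine (Finset.sum_subset (Finset.subset_univ _) ?_).symm
  intro x _ hx
  simp only [Finset.mem_insert, Finset.mem_singleton, not_or] at hx
  exact hz x hx.1 hx.2.1 hx.2.2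

lemma coord0 (m : ℕ) (g : Fin (m+3) → ℤ) (h : 0 < m+4) :
    ∑ i, g i * vv m i ⟨0, h⟩ = g ⟨0, by omega⟩ - g ⟨2, by omega⟩ := by
  rw [sum_two m _ ⟨0, by omega⟩ ⟨2, by omega⟩ (by simp [Fin.ext_iff])]
  · rw [vvmk, vvmk]
    simp only [Fin.val_mk]
    unfold pp qq rr
    split_ifs <;> first | ring1 | (exfalso; first | omega | exact ‹False› | exact ‹¬True› trivial)
  · intro i hi0 hi2
    have n0 : (i:ℕ) ≠ 0 := fun hh => hi0 (Fin.ext hh)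
    have n2 : (i:ℕ) ≠ 2 := fun hh => hi2 (Fin.ext hh)
    rw [vv_eq_zero m i 0 h (by unfold pp; split_ifs <;> omega)
      (by unfold qq; split_ifs <;> omega) (by unfold rr; split_ifs <;> omega), mul_zero]

lemma coord1 (m : ℕ) (g : Fin (m+3) → ℤ) (h : 1 < m+4) :
    ∑ i, g i * vv m i ⟨1, h⟩ = g ⟨1, by omega⟩ - g ⟨0, by omega⟩ - g ⟨2, by omega⟩ := by
  rw [sum_three m _ ⟨0, by omega⟩ ⟨1, by omega⟩ ⟨2, by omega⟩
    (by simp [Fin.ext_iff]) (by simp [Fin.ext_iff]) (by simp [Fin.ext_iff])]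
  · rw [vvmk, vvmk, vvmk]
    simp only [Fin.val_mk]
    unfold pp qq rr
    split_ifs <;> first | ring1 | (exfalso; first | omega | exact ‹False› | exact ‹¬True› trivial)
  · intro i hi0 hi1 hi2
    have n0 : (i:ℕ) ≠ 0 := fun hh => hi0 (Fin.ext hh)
    have n1 : (i:ℕ) ≠ 1 := fun hh => hi1 (Fin.ext hh)
    have n2 : (i:ℕ) ≠ 2 := fun hh => hi2 (Fin.ext hh)
    have hip := i.isLt
    rw [vv_eq_zero m i 1 h (by unfold pp; split_ifs <;> omega)
      (by unfold qq; split_ifs <;> omega) (by unfold rr; split_ifs <;> omega), mul_zero]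

lemma coord2 (m : ℕ) (g : Fin (m+3) → ℤ) (h : 2 < m+4) :
    ∑ i, g i * vv m i ⟨2, h⟩ = -g ⟨1, by omega⟩ := by
  rw [sum_one m _ ⟨1, by omega⟩]
  · rw [vvmk]
    simp only [Fin.val_mk]
    unfold pp qq rr
    split_ifs <;> first | ring1 | (exfalso; first | omega | exact ‹False› | exact ‹¬True› trivial)
  · intro i hi1
    have n1 : (i:ℕ) ≠ 1 := fun hh => hi1 (Fin.ext hh)
    have hip := i.isLt
    rw [vv_eq_zero m i 2 h (by unfold pp; split_ifs <;> omega)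
      (by unfold qq; split_ifs <;> omega) (by unfold rr; split_ifs <;> omega), mul_zero]

lemma coordT (m : ℕ) (g : Fin (m+3) → ℤ) (t : ℕ) (h3 : 3 ≤ t) (hle : t ≤ m+2) (h : t < m+4) :
    ∑ i, g i * vv m i ⟨t, h⟩ = g ⟨t-1, by omega⟩ - g ⟨t, by omega⟩ := by
  rw [sum_two m _ ⟨t-1, by omega⟩ ⟨t, by omega⟩ (by simp only [ne_eq, Fin.mk.injEq]; omega)]
  · rw [vvmk, vvmk]
    simp only [Fin.val_mk]
    unfold pp qq rr
    split_ifs <;> first | ring1 | (exfalso; first | omega | exact ‹False› | exact ‹¬True› trivial)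
  · intro i hi0 hi1
    have n0 : (i:ℕ) ≠ t-1 := fun hh => hi0 (by apply Fin.ext; simp only [Fin.val_mk]; omega)
    have n1 : (i:ℕ) ≠ t := fun hh => hi1 (Fin.ext hh)
    have hip := i.isLt
    rw [vv_eq_zero m i t h (by unfold pp; split_ifs <;> omega)
      (by unfold qq; split_ifs <;> omega) (by unfold rr; split_ifs <;> omega), mul_zero]

lemma coordLast (m : ℕ) (g : Fin (m+3) → ℤ) (h : m+3 < m+4) :
    ∑ i, g i * vv m i ⟨m+3, h⟩ = g ⟨m+2, by omega⟩ := by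
  rw [sum_one m _ ⟨m+2, by omega⟩]
  · rw [vvmk]
    simp only [Fin.val_mk]
    unfold pp qq rr
    split_ifs <;> first | ring1 | (exfalso; first | omega | exact ‹False› | exact ‹¬True› trivial)
  · intro i hi
    have n0 : (i:ℕ) ≠ m+2 := fun hh => hi (Fin.ext hh)
    have hip := i.isLt
    rw [vv_eq_zero m i (m+3) h (by unfold pp; split_ifs <;> omega)
      (by unfold qq; split_ifs <;> omega) (by unfold rr; split_ifs <;> omega), mul_zero]

lemma orth (m : ℕ) (σ : Fin (m+4) → ℤ) (hσ : ∀ k, σ k = if (k:ℕ) ≤ 2 then 1 else 2)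
    (i : Fin (m+3)) : ∑ k, vv m i k * σ k = 0 := by
  have hip := i.isLt
  have hp : pp (i:ℕ) < m+4 := by unfold pp; split_ifs <;> omega
  have hq : qq (i:ℕ) < m+4 := by unfold qq; split_ifs <;> omega
  rw [dot_expand, dif_pos hp, dif_pos hq]
  rcases eq_or_ne ((i:ℕ)) 2 with h2 | h2
  · rw [dif_pos (show rr (m+4) (i:ℕ) < m+4 from by unfold rr; split_ifs <;> omega)]
    simp only [hσ, Fin.val_mk]
    unfold pp qq rr
    split_ifs <;> omega
  · rw [dif_neg (show ¬ rr (m+4) (i:ℕ) < m+4 from by unfold rr; split_ifs <;> omega)]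
    simp only [hσ, Fin.val_mk]
    unfold pp qq
    split_ifs <;> omega

end S12

theorem stmt_12 (n : ℕ) (hn : 3 ≤ n) (σ : Fin (n + 1) → ℤ)
    (hσ : ∀ i, σ i = if (i : ℕ) ≤ 2 then 1 else 2) :
    ∃ v : Fin n → (Fin (n + 1) → ℤ),
      LinearIndependent ℤ v ∧
      (∀ x : Fin (n + 1) → ℤ,
        x ∈ Submodule.span ℤ (Set.range v) ↔ -(∑ i, x i * σ i) = 0) ∧
      ∀ i j : Fin n,
        -(∑ k, v i k * v j k) = triM n (fun i => if (i : ℕ) = 2 then -3 else -2) i j := by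
  obtain ⟨m, rfl⟩ : ∃ m, n = m + 3 := ⟨n - 3, by omega⟩
  refine ⟨S12.vv m, ?_, ?_, fun i j => S12.gram m i j⟩
  · -- linear independence
    rw [Fintype.linearIndependent_iff]
    intro g hg
    have hco : ∀ k : Fin (m+4), (∑ i, g i * S12.vv m i k) = 0 := by
      intro k
      have h1 := congrFun hg k
      simpa [Finset.sum_apply, Pi.smul_apply, smul_eq_mul] using h1
    have h1 : g ⟨1, by omega⟩ = 0 := by
      have := hco ⟨2, by omega⟩
      rw [S12.coord2 m g (by omega)] at this
      omega
    have hlast : g ⟨m+2, by omega⟩ = 0 := by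
      have := hco ⟨m+3, by omega⟩
      rw [S12.coordLast m g (by omega)] at this
      exact this
    have step : ∀ t (ht : 3 ≤ t) (hle : t ≤ m+2), g ⟨t-1, by omega⟩ = g ⟨t, by omega⟩ := by
      intro t ht hle
      have := hco ⟨t, by omega⟩
      rw [S12.coordT m g t ht hle (by omega)] at this
      omega
    have key : ∀ d t, t = m+2-d → 2 ≤ t → ∀ (hlt : t < m+3), g ⟨t, hlt⟩ = 0 := by
      intro d
      induction d with
      | zero =>
        intro t h h2 hlt
        have : t = m+2 := by omega
        subst this
        exact hlast
      | succ d ih =>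
        intro t h h2 hlt
        rcases eq_or_ne t (m+2) with he | hne
        · subst he; exact hlast
        · have e1 : g ⟨t, by omega⟩ = g ⟨t+1, by omega⟩ := step (t+1) (by omega) (by omega)
          rw [e1]
          exact ih (t+1) (by omega) (by omega) (by omega)
    intro i
    have hi := i.isLt
    rcases (show (i:ℕ) = 0 ∨ (i:ℕ) = 1 ∨ (2 ≤ (i:ℕ) ∧ (i:ℕ) ≤ m+2) by omega) with h | h | ⟨ha, hb⟩
    · have h0 : g ⟨0, by omega⟩ - g ⟨2, by omega⟩ = 0 := by
        have := hco ⟨0, by omega⟩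
        rw [S12.coord0 m g (by omega)] at this
        exact this
      have h2 := key m 2 (by omega) (by omega) (by omega)
      have hie : i = ⟨0, by omega⟩ := Fin.ext h
      rw [hie]
      omega
    · have hie : i = ⟨1, by omega⟩ := Fin.ext h
      rw [hie]; exact h1
    · exact key (m+2-(i:ℕ)) (i:ℕ) (by omega) ha hi
  · -- span characterization
    intro x
    rw [neg_eq_zero]
    constructor
    · intro hx
      induction hx using Submodule.span_induction with
      | mem y hy =>
        obtain ⟨i, rfl⟩ := hy
        exact S12.orth m σ hσ i
      | zero => simp
      | add y z hy hz hy' hz' =>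
        have he : ∀ kk : Fin (m+4), (y+z) kk * σ kk = y kk * σ kk + z kk * σ kk :=
          fun kk => by simp [add_mul]
        simp only [he, Finset.sum_add_distrib, hy', hz', add_zero]
      | smul a y hy hy' =>
        have he : ∀ kk : Fin (m+4), (a • y) kk * σ kk = a * (y kk * σ kk) :=
          fun kk => by simp [mul_assoc]
        simp only [he, ← Finset.mul_sum, hy', mul_zero]
    · intro hx
      have hx2 : ∑ k : Fin (m+4), x k * σ k = 0 := hx
      set S : ℕ → ℤ := fun t => ∑ k : Fin (m+4), (if t ≤ (k:ℕ) then x k else 0) with hSdef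
      have Stop : S (m+4) = 0 := by
        apply Finset.sum_eq_zero; intro k _
        rw [if_neg]; have := k.isLt; omega
      have Sstep : ∀ t, ∀ (h : t < m+4), S t = x ⟨t, h⟩ + S (t+1) := by
        intro t h
        have hsplit : ∀ k : Fin (m+4), (if t ≤ (k:ℕ) then x k else 0)
            = (if (k:ℕ) = t then x k else 0) + (if t+1 ≤ (k:ℕ) then x k else 0) := by
          intro k; split_ifs <;> first | ring1 | (exfalso; omega)
        calc S t = ∑ k : Fin (m+4), ((if (k:ℕ) = t then x k else 0)
              + (if t+1 ≤ (k:ℕ) then x k else 0)) := Finset.sum_congr rfl (fun k _ => hsplit k)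
        _ = (∑ k : Fin (m+4), if (k:ℕ) = t then x k else 0) + S (t+1) := Finset.sum_add_distrib
        _ = x ⟨t, h⟩ + S (t+1) := by
            congr 1
            rw [Finset.sum_eq_single (⟨t, h⟩ : Fin (m+4))]
            · simp
            · intro b _ hb; rw [if_neg (fun hc => hb (Fin.ext hc))]
            · simp
      have hσS : S 0 + S 3 = 0 := by
        have he : ∑ k : Fin (m+4), x k * σ k = S 0 + S 3 := by
          rw [hSdef, ← Finset.sum_add_distrib]
          apply Finset.sum_congr rfl
          intro k _
          rw [hσ k]
          split_ifs <;> first | ring1 | (exfalso; omega)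
        omega
      have hb0 : (0:ℕ) < m+4 := by omega
      have hb1 : (1:ℕ) < m+4 := by omega
      have hb2 : (2:ℕ) < m+4 := by omega
      have hs : x ⟨0, hb0⟩ + x ⟨1, hb1⟩ + x ⟨2, hb2⟩ + 2 * S 3 = 0 := by
        have e0 : S 0 = x ⟨0, hb0⟩ + S 1 := Sstep 0 hb0
        have e1 : S 1 = x ⟨1, hb1⟩ + S 2 := Sstep 1 hb1
        have e2 : S 2 = x ⟨2, hb2⟩ + S 3 := Sstep 2 hb2
        omega
      set c : Fin (m+3) → ℤ := fun i => if (i:ℕ) = 0 then x ⟨0, hb0⟩ + S 3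
        else if (i:ℕ) = 1 then -x ⟨2, hb2⟩ else S ((i:ℕ)+1) with hcdef
      have hc0 : c ⟨0, by omega⟩ = x ⟨0, hb0⟩ + S 3 := by simp [hcdef]
      have hc1 : c ⟨1, by omega⟩ = -x ⟨2, hb2⟩ := by simp [hcdef]
      have hct : ∀ t (ht : 2 ≤ t) (h : t < m+3), c ⟨t, h⟩ = S (t+1) := by
        intro t ht h
        simp only [hcdef, Fin.val_mk]
        rw [if_neg (by omega), if_neg (by omega)]
      have hrepr : (∑ i, c i • S12.vv m i) = x := by
        funext k
        obtain ⟨t, ht⟩ := k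
        have happ : (∑ i, c i • S12.vv m i) ⟨t, ht⟩ = ∑ i, c i * S12.vv m i ⟨t, ht⟩ := by
          simp only [Finset.sum_apply, Pi.smul_apply, smul_eq_mul]
        rw [happ]
        rcases (show t = 0 ∨ t = 1 ∨ t = 2 ∨ (3 ≤ t ∧ t ≤ m+2) ∨ t = m+3 by omega)
          with h|h|h|⟨h3,hle⟩|h
        · subst h
          rw [S12.coord0 m c ht, hc0, hct 2 (by omega) (by omega)]
          rw [show x ⟨0, ht⟩ = x ⟨0, hb0⟩ from rfl, show (2:ℕ)+1 = 3 from rfl]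
          ring
        · subst h
          rw [S12.coord1 m c ht, hc0, hc1, hct 2 (by omega) (by omega)]
          rw [show x ⟨1, ht⟩ = x ⟨1, hb1⟩ from rfl, show (2:ℕ)+1 = 3 from rfl]
          omega
        · subst h
          rw [S12.coord2 m c ht, hc1]
          rw [show x ⟨2, ht⟩ = x ⟨2, hb2⟩ from rfl]
          ring
        · rw [S12.coordT m c t h3 hle ht, hct (t-1) (by omega) (by omega),
            hct t (by omega) (by omega)]
          have e : S t = x ⟨t, ht⟩ + S (t+1) := Sstep t ht
          have ht1 : t - 1 + 1 = t := by omega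
          rw [ht1]
          omega
        · subst h
          rw [S12.coordLast m c ht, hct (m+2) (by omega) (by omega)]
          have e : S (m+3) = x ⟨m+3, ht⟩ + S (m+4) := Sstep (m+3) ht
          have e2 : S (m+2+1) = S (m+3) := rfl
          omega
      rw [← hrepr]
      exact Submodule.sum_smul_mem _ c (fun i _ => Submodule.subset_span ⟨i, rfl⟩)
end

section
/- If p/q = [x_1, ..., x_n]^- with all x_i ≥ 2 integers, then the tridiagonal matrix with diagonal entries −x_1, ..., −x_n and sub/super-diagonal entries 1 is negative definite, and its determinant has absolute value p. -/
/-! ### Auxiliary: continuants of the negative continued fraction -/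

def contD : (n : ℕ) → (Fin n → ℤ) → ℤ
  | 0, _ => 1
  | 1, d => d 0
  | (n+2), d => d 0 * contD (n+1) (fun i => d i.succ) - contD n (fun i => d i.succ.succ)

lemma contD_pos : ∀ (n : ℕ) (d : Fin (n+1) → ℤ), (∀ i, 2 ≤ d i) →
    contD n (fun i => d i.succ) < contD (n+1) d ∧ 0 < contD (n+1) d
  | 0, d, hd => by
      have := hd 0
      exact ⟨by show (1:ℤ) < d 0; omega, by show (0:ℤ) < d 0; omega⟩
  | 1, d, hd => by
      have h0 := hd 0; have h1 := hd (Fin.succ 0)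
      have e : contD (1+1) d = d 0 * d (Fin.succ 0) - 1 := rfl
      have e1 : contD 1 (fun i => d i.succ) = d (Fin.succ 0) := rfl
      rw [e, e1]
      constructor <;> nlinarith
  | (n+2), d, hd => by
      have ih1 := contD_pos (n+1) (fun i => d i.succ) (fun i => hd _)
      have ih2 := contD_pos n (fun i => d i.succ.succ) (fun i => hd _)
      have h0 := hd 0
      have e : contD (n+2+1) d
          = d 0 * contD (n+2) (fun i => d i.succ) - contD (n+1) (fun i => d i.succ.succ) := rfl
      rw [e]
      constructor <;> nlinarith [ih1.1, ih1.2, ih2.1, ih2.2]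

lemma contD_cop : ∀ (n : ℕ) (d : Fin (n+1) → ℤ),
    IsCoprime (contD (n+1) d) (contD n (fun i => d i.succ))
  | 0, d => by
      have e : contD 0 (fun i => d i.succ) = 1 := rfl
      rw [e]; exact isCoprime_one_right
  | (n+1), d => by
      have ih := contD_cop n (fun i => d i.succ)
      have e : contD (n+1+1) d
          = d 0 * contD (n+1) (fun i => d i.succ) - contD n (fun i => d i.succ.succ) := rfl
      rw [e]
      have h : IsCoprime (-(contD n fun i => d i.succ.succ)) (contD (n+1) fun i => d i.succ) :=
        ih.symm.neg_left
      have := h.add_mul_right_left (d 0)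
      convert this using 1
      exacts [rfl, by ring]

lemma contD_neg : ∀ (n : ℕ) (d : Fin n → ℤ),
    contD n (fun i => -(d i)) = (-1)^n * contD n d
  | 0, d => by
      rw [show contD 0 (fun i => -(d i)) = 1 from rfl, show contD 0 d = 1 from rfl]; ring
  | 1, d => by
      rw [show contD 1 (fun i => -(d i)) = -(d 0) from rfl, show contD 1 d = d 0 from rfl]; ring
  | (n+2), d => by
      have ih1 := contD_neg (n+1) (fun i => d i.succ)
      have ih2 := contD_neg n (fun i => d i.succ.succ)
      rw [show contD (n+2) (fun i => -(d i))
            = (-(d 0)) * contD (n+1) (fun i => -(d i.succ)) - contD n (fun i => -(d i.succ.succ))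
          from rfl,
        show contD (n+2) d
            = d 0 * contD (n+1) (fun i => d i.succ) - contD n (fun i => d i.succ.succ) from rfl,
        ih1, ih2]
      ring

lemma ncf_cons_s17 (a : ℤ) (l : List ℤ) (h : l ≠ []) : ncf (a :: l) = (a:ℚ) - 1 / ncf l := by
  cases l with
  | nil => simp at h
  | cons b m => rfl

lemma contD_pos' (n : ℕ) (d : Fin n → ℤ) (hd : ∀ i, 2 ≤ d i) : 0 < contD n d := by
  cases n with
  | zero => exact one_pos
  | succ n => exact (contD_pos n d hd).2

lemma ncf_eq : ∀ (n : ℕ) (x : Fin (n+1) → ℤ), (∀ i, 2 ≤ x i) →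
    ncf (List.ofFn x) = (contD (n+1) x : ℚ) / (contD n (fun i => x i.succ) : ℚ)
  | 0, x, hx => by
      simp [List.ofFn_succ, ncf]
      rw [show contD 1 x = x 0 from rfl, show contD 0 (fun i : Fin 0 => x i.succ) = 1 from rfl]
      simp
  | (n+1), x, hx => by
      have ih := ncf_eq n (fun i => x i.succ) (fun i => hx _)
      have hA : (0:ℤ) < contD (n+1) (fun i => x i.succ) := contD_pos' _ _ (fun i => hx _)
      have hB : (0:ℤ) < contD n (fun i => x i.succ.succ) := contD_pos' _ _ (fun i => hx _)
      have hBA : contD n (fun i => x i.succ.succ) < contD (n+1) (fun i => x i.succ) :=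
        (contD_pos n _ (fun i => hx _)).1
      have e : contD (n+1+1) x
          = x 0 * contD (n+1) (fun i => x i.succ) - contD n (fun i => x i.succ.succ) := rfl
      have ih' : ncf (List.ofFn fun i => x i.succ)
          = (contD (n+1) (fun i => x i.succ) : ℚ) / (contD n (fun i => x i.succ.succ) : ℚ) := ih
      rw [List.ofFn_succ, ncf_cons_s17 _ _ (by simp), ih', e]
      have hA' : ((contD (n+1) fun i => x i.succ : ℤ) : ℚ) ≠ 0 := by exact_mod_cast hA.ne'
      have hB' : ((contD n fun i => x i.succ.succ : ℤ) : ℚ) ≠ 0 := by exact_mod_cast hB.ne'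
      field_simp
      push_cast
      ring

/-! ### Auxiliary: the determinant of `triM` -/

lemma triM_apply (n : ℕ) (d : Fin n → ℤ) (i j : Fin n) :
    triM n d i j
      = if (i:ℕ) = (j:ℕ) then d i
        else if (i:ℕ) = (j:ℕ) + 1 ∨ (j:ℕ) = (i:ℕ) + 1 then 1 else 0 := by
  simp only [triM, Fin.ext_iff]
  split_ifs <;> first | rfl | omega

lemma det_triM : ∀ (n : ℕ) (d : Fin n → ℤ), (triM n d).det = contD n d
  | 0, d => by rw [show contD 0 d = 1 from rfl]; simp
  | 1, d => by
      rw [show contD 1 d = d 0 from rfl, Matrix.det_fin_one]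
      simp [triM_apply]
  | (n+2), d => by
      have ih1 := det_triM (n+1) (fun i => d i.succ)
      have ih2 := det_triM n (fun i => d i.succ.succ)
      set A := triM (n+2) d with hA
      have e : contD (n+2) d
          = d 0 * contD (n+1) (fun i => d i.succ) - contD n (fun i => d i.succ.succ) := rfl
      have E1 : A.submatrix Fin.succ (Fin.succAbove 0) = triM (n+1) (fun i => d i.succ) := by
        ext i j
        simp only [Matrix.submatrix_apply, hA, triM_apply, Fin.succAbove_zero, Fin.val_succ]
        split_ifs <;> first | rfl | omega
      set M1 := A.submatrix Fin.succ (Fin.succAbove (Fin.succ 0)) with hM1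
      have hs0 : Fin.succAbove (Fin.succ 0) (0 : Fin (n+1)) = (0 : Fin (n+2)) := by
        ext; simp [Fin.succAbove]
      have hss : ∀ j : Fin n, Fin.succAbove (Fin.succ (0 : Fin (n+1))) j.succ = j.succ.succ := by
        intro j; ext; simp [Fin.succAbove, Fin.lt_def]
      have E2 : M1.submatrix (Fin.succAbove 0) Fin.succ = triM n (fun i => d i.succ.succ) := by
        ext i j
        simp only [hM1, Matrix.submatrix_apply, Fin.succAbove_zero, hss, hA, triM_apply,
          Fin.val_succ]
        split_ifs <;> first | rfl | omega
      have hM1det : M1.det = contD n (fun i => d i.succ.succ) := by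
        rw [Matrix.det_succ_column_zero, Fin.sum_univ_succ]
        have h00 : M1 0 0 = 1 := by
          simp only [hM1, Matrix.submatrix_apply, hs0, hA, triM_apply]
          norm_num
        have hz : ∀ i : Fin n, M1 i.succ 0 = 0 := by
          intro i
          have h0 : ((0:Fin (n+2)):ℕ) = 0 := rfl
          simp only [hM1, Matrix.submatrix_apply, hs0, hA, triM_apply, Fin.val_succ]
          split_ifs <;> first | rfl | omega
        simp only [hz, h00, E2, ih2]
        simp
      rw [Matrix.det_succ_row_zero, Fin.sum_univ_succ, Fin.sum_univ_succ]
      have hA00 : A 0 0 = d 0 := by simp [hA, triM_apply]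
      have hA01 : A 0 (Fin.succ 0) = 1 := by simp [hA, triM_apply]
      have hz : ∀ j : Fin n, A 0 j.succ.succ = 0 := by
        intro j
        have h0 : ((0:Fin (n+2)):ℕ) = 0 := rfl
        simp only [hA, triM_apply, Fin.val_succ]
        split_ifs <;> first | rfl | omega
      simp only [hA00, hA01, hz, E1, ih1, hM1det, e]
      simp
      rw [← Fin.succ_zero_eq_one, ← hM1, hM1det]
      ring

/-! ### Auxiliary: the quadratic form -/

lemma offdiag_sum (n : ℕ) (f g : Fin (n+1) → ℚ) :
    ∑ i : Fin (n+1), ∑ j : Fin (n+1), (if (j:ℕ) = (i:ℕ)+1 then f i * g j else 0)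
      = ∑ k : Fin n, f k.castSucc * g k.succ := by
  rw [Fin.sum_univ_castSucc]
  have hlast : ∑ j : Fin (n+1),
      (if (j:ℕ) = ((Fin.last n):ℕ)+1 then f (Fin.last n) * g j else 0) = 0 := by
    apply Finset.sum_eq_zero; intro j _
    rw [if_neg]; have := j.isLt; simp only [Fin.val_last]; omega
  rw [hlast, add_zero]
  apply Finset.sum_congr rfl
  intro k _
  have step : ∑ j : Fin (n+1),
        (if (j:ℕ) = ((k.castSucc : Fin (n+1)):ℕ)+1 then f k.castSucc * g j else 0)
      = ∑ j : Fin (n+1), (if j = k.succ then f k.castSucc * g j else 0) := by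
    apply Finset.sum_congr rfl
    intro j _
    by_cases h : (j:ℕ) = ((k.castSucc : Fin (n+1)):ℕ)+1
    · rw [if_pos h, if_pos (by ext; simpa [Fin.val_succ, Fin.coe_castSucc] using h)]
    · rw [if_neg h, if_neg (by intro hj; apply h; subst hj; simp [Fin.val_succ, Fin.coe_castSucc])]
  rw [step, Finset.sum_ite_eq' Finset.univ k.succ (fun j => f k.castSucc * g j)]
  simp

lemma diag_sum (n : ℕ) (t : Fin n → Fin n → ℚ) :
    ∑ i : Fin n, ∑ j : Fin n, (if (i:ℕ) = (j:ℕ) then t i j else 0)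
      = ∑ i : Fin n, t i i := by
  apply Finset.sum_congr rfl
  intro i _
  have step : ∑ j : Fin n, (if (i:ℕ) = (j:ℕ) then t i j else 0)
      = ∑ j : Fin n, (if j = i then t i j else 0) := by
    apply Finset.sum_congr rfl
    intro j _
    by_cases h : (i:ℕ) = (j:ℕ)
    · rw [if_pos h, if_pos (Fin.ext h.symm)]
    · rw [if_neg h, if_neg (by intro hj; subst hj; exact h rfl)]
  rw [step, Finset.sum_ite_eq' Finset.univ i (fun j => t i j)]
  simp

lemma quad_identity (n : ℕ) (x : Fin (n+1) → ℤ) (y : Fin (n+1) → ℚ) :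
    ∑ i : Fin (n+1), ∑ j : Fin (n+1), y i * ((triM (n+1) (fun i => -x i) i j : ℤ) : ℚ) * y j
      = (∑ i : Fin (n+1), -((x i : ℚ)) * (y i * y i))
        + 2 * ∑ k : Fin n, y k.castSucc * y k.succ := by
  have hsplit : ∀ i j : Fin (n+1), y i * ((triM (n+1) (fun i => -x i) i j : ℤ) : ℚ) * y j
      = (if (i:ℕ) = (j:ℕ) then -((x i : ℚ)) * (y i * y j) else 0)
        + ((if (j:ℕ) = (i:ℕ)+1 then y i * y j else 0)
        + (if (i:ℕ) = (j:ℕ)+1 then y j * y i else 0)) := by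
    intro i j
    simp only [triM_apply, apply_ite ((↑·) : ℤ → ℚ)]
    split_ifs <;> first | (push_cast; ring1) | (exfalso; omega)
  calc ∑ i : Fin (n+1), ∑ j : Fin (n+1), y i * ((triM (n+1) (fun i => -x i) i j : ℤ) : ℚ) * y j
      = ∑ i : Fin (n+1), ∑ j : Fin (n+1),
          ((if (i:ℕ) = (j:ℕ) then -((x i : ℚ)) * (y i * y j) else 0)
        + ((if (j:ℕ) = (i:ℕ)+1 then y i * y j else 0)
        + (if (i:ℕ) = (j:ℕ)+1 then y j * y i else 0))) := by
        exact Finset.sum_congr rfl fun i _ => Finset.sum_congr rfl fun j _ => hsplit i j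
    _ = (∑ i : Fin (n+1), ∑ j : Fin (n+1),
          (if (i:ℕ) = (j:ℕ) then -((x i : ℚ)) * (y i * y j) else 0))
        + ((∑ i : Fin (n+1), ∑ j : Fin (n+1), (if (j:ℕ) = (i:ℕ)+1 then y i * y j else 0))
        + (∑ i : Fin (n+1), ∑ j : Fin (n+1), (if (i:ℕ) = (j:ℕ)+1 then y j * y i else 0))) := by
        simp [Finset.sum_add_distrib]
    _ = (∑ i : Fin (n+1), -((x i : ℚ)) * (y i * y i))
        + 2 * ∑ k : Fin n, y k.castSucc * y k.succ := by
        rw [diag_sum]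
        congr 1
        rw [offdiag_sum n y y]
        have hc : ∑ i : Fin (n+1), ∑ j : Fin (n+1), (if (i:ℕ) = (j:ℕ)+1 then y j * y i else 0)
            = ∑ j : Fin (n+1), ∑ i : Fin (n+1), (if (i:ℕ) = (j:ℕ)+1 then y j * y i else 0) :=
          Finset.sum_comm
        rw [hc, offdiag_sum n y y]
        ring

lemma quad_bound (n : ℕ) (y : Fin (n+1) → ℚ) :
    2 * (∑ i : Fin (n+1), y i * y i) - 2 * (∑ k : Fin n, y k.castSucc * y k.succ)
      = y 0 * y 0 + y (Fin.last n) * y (Fin.last n)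
        + ∑ k : Fin n, (y k.castSucc - y k.succ)^2 := by
  have h1 : ∑ k : Fin n, (y k.castSucc - y k.succ)^2
      = ∑ k : Fin n, ((y k.castSucc * y k.castSucc) + (y k.succ * y k.succ)
          - 2*(y k.castSucc * y k.succ)) := by
    apply Finset.sum_congr rfl; intro k _; ring
  have h2 : ∑ k : Fin n, y k.castSucc * y k.castSucc
      = (∑ i : Fin (n+1), y i * y i) - y (Fin.last n) * y (Fin.last n) := by
    rw [Fin.sum_univ_castSucc (f := fun i => y i * y i)]; ring
  have h3 : ∑ k : Fin n, y k.succ * y k.succ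
      = (∑ i : Fin (n+1), y i * y i) - y 0 * y 0 := by
    rw [Fin.sum_univ_succ (f := fun i => y i * y i)]; ring
  rw [h1, Finset.sum_sub_distrib, Finset.sum_add_distrib, h2, h3, ← Finset.mul_sum]
  ring

lemma quad_neg (n : ℕ) (x : Fin (n+1) → ℤ) (hx : ∀ i, 2 ≤ x i)
    (y : Fin (n+1) → ℚ) (hy : y ≠ 0) :
    ∑ i : Fin (n+1), ∑ j : Fin (n+1), y i * ((triM (n+1) (fun i => -x i) i j : ℤ) : ℚ) * y j
      < 0 := by
  rw [quad_identity]
  have hb : (∑ i : Fin (n+1), -((x i : ℚ)) * (y i * y i))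
      ≤ ∑ i : Fin (n+1), -2 * (y i * y i) := by
    apply Finset.sum_le_sum
    intro i _
    have h2 : (2:ℚ) ≤ (x i : ℚ) := by exact_mod_cast hx i
    nlinarith [mul_self_nonneg (y i)]
  have key := quad_bound n y
  have hdiffs : 0 ≤ ∑ k : Fin n, (y k.castSucc - y k.succ)^2 :=
    Finset.sum_nonneg fun k _ => sq_nonneg _
  have h0 : 0 ≤ y 0 * y 0 := mul_self_nonneg _
  have hl : 0 ≤ y (Fin.last n) * y (Fin.last n) := mul_self_nonneg _
  have hpos : 0 < y 0 * y 0 + y (Fin.last n) * y (Fin.last n)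
      + ∑ k : Fin n, (y k.castSucc - y k.succ)^2 := by
    rcases lt_or_eq_of_le (by linarith :
        (0:ℚ) ≤ y 0 * y 0 + y (Fin.last n) * y (Fin.last n)
          + ∑ k : Fin n, (y k.castSucc - y k.succ)^2) with h | h
    · exact h
    exfalso
    apply hy
    have hy0 : y 0 = 0 := by
      have : y 0 * y 0 = 0 := by linarith
      exact mul_self_eq_zero.mp this
    have hsum0 : ∑ k : Fin n, (y k.castSucc - y k.succ)^2 = 0 := by linarith
    have hdiff : ∀ k : Fin n, y k.castSucc = y k.succ := by
      intro k
      have := (Finset.sum_eq_zero_iff_of_nonneg (fun k _ => sq_nonneg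
        (y k.castSucc - y k.succ))).mp hsum0 k (Finset.mem_univ k)
      have := pow_eq_zero_iff (n := 2) (by norm_num) |>.mp this
      linarith
    funext i
    induction i using Fin.induction with
    | zero => exact hy0
    | succ k ih => rw [← hdiff k]; exact ih
  have hms : ∑ i : Fin (n+1), -2 * (y i * y i) = -2 * ∑ i : Fin (n+1), y i * y i := by
    rw [← Finset.mul_sum]
  linarith

/-! ### Main theorem -/

theorem stmt_17 (m : ℕ) (hm : 1 ≤ m) (x : Fin m → ℤ) (hx : ∀ i, 2 ≤ x i)
    (p q : ℤ) (hq : 0 < q) (hpq : q < p) (hcop : IsCoprime p q)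
    (hcf : ncf (List.ofFn x) = (p : ℚ) / q) :
    (∀ y : Fin m → ℚ, y ≠ 0 →
      ∑ i, ∑ j, y i * (triM m (fun i => -x i) i j : ℚ) * y j < 0) ∧
    |(triM m (fun i => -x i)).det| = p := by
  obtain ⟨n, rfl⟩ : ∃ n, m = n + 1 := ⟨m - 1, by omega⟩
  constructor
  · exact fun y hy => quad_neg n x hx y hy
  · -- determinant part
    have hA : (0:ℤ) < contD (n+1) x := contD_pos' _ _ hx
    have hB : (0:ℤ) < contD n (fun i => x i.succ) := contD_pos' _ _ (fun i => hx _)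
    have hcf' : (contD (n+1) x : ℚ) / (contD n (fun i => x i.succ) : ℚ) = (p : ℚ) / q := by
      rw [← ncf_eq n x hx]; exact hcf
    have hq' : ((q:ℤ):ℚ) ≠ 0 := by exact_mod_cast hq.ne'
    have hB' : ((contD n (fun i => x i.succ) : ℤ) : ℚ) ≠ 0 := by exact_mod_cast hB.ne'
    have hcross : contD (n+1) x * q = p * contD n (fun i => x i.succ) := by
      have := (div_eq_div_iff hB' hq').mp hcf'
      exact_mod_cast this
    have hpdvd : p ∣ contD (n+1) x :=
      hcop.dvd_of_dvd_mul_right ⟨contD n (fun i => x i.succ), hcross⟩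
    have hAdvd : contD (n+1) x ∣ p :=
      (contD_cop n x).dvd_of_dvd_mul_right ⟨q, hcross.symm⟩
    have hpA : p = contD (n+1) x :=
      Int.dvd_antisymm (by omega) (le_of_lt hA) hpdvd hAdvd
    rw [det_triM, contD_neg (n+1) x, abs_mul, abs_pow, abs_neg, abs_one, one_pow, one_mul,
      abs_of_pos hA, hpA]
end
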